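/- arXiv:2003.13291 — 4 statements merged into one kernel-verified Lean document; each statement's English description precedes it below -/
import Mathlib

section
/- If a set P of n red and n blue points in convex position admits a separated bichromatic matching with k segments (a non-crossing properly-colored matching all of whose segments are crossed by a common line), then P admits a non-crossing alternating path of length 2k (a sequence of 2k distinct points, consecutive points having different colors, whose segments are pairwise non-crossing). -/
open scoped BigOperators

namespace SepMatchPaper

/-- Orientation cross product of the triple `(o, a, b)` in the plane. -/
def cross (o a b : ℝ × ℝ) : ℝ :=
  (a.1 - o.1) * (b.2 - o.2) - (a.2 - o.2) * (b.1 - o.1)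

/-- The first `m` points of `p` are in convex position, listed in clockwise
order: every triple of points, taken in index order, is oriented clockwise. -/
def ConvexCW (m : ℕ) (p : ℕ → ℝ × ℝ) : Prop :=
  ∀ i j l : ℕ, i < j → j < l → l < m → cross (p i) (p j) (p l) < 0

/-- Number of indices of color `b` in the finite set `S` (true = red, false = blue). -/
def cnt (c : ℕ → Bool) (b : Bool) (S : Finset ℕ) : ℕ :=
  (S.filter fun x => c x = b).card

/-- The coloring `c` of the `2n` points has exactly `n` red and `n` blue points. -/
def Balanced (n : ℕ) (c : ℕ → Bool) : Prop :=
  cnt c true (Finset.range (2 * n)) = n ∧ cnt c false (Finset.range (2 * n)) = n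

/-- The closed segment between the points number `e.1` and `e.2`. -/
def seg (p : ℕ → ℝ × ℝ) (e : ℕ × ℕ) : Set (ℝ × ℝ) :=
  segment ℝ (p e.1) (p e.2)

/-- `L` is a line in the plane. -/
def IsLine (L : Set (ℝ × ℝ)) : Prop :=
  ∃ a b : ℝ × ℝ, a ≠ b ∧ L = (affineSpan ℝ ({a, b} : Set (ℝ × ℝ)) : Set (ℝ × ℝ))

/-- The endpoint of the edge `e` selected by `s`. -/
def ep (e : ℕ × ℕ) (s : Bool) : ℕ := if s then e.1 else e.2

/-- `e 0, …, e (K-1)` is a separated matching on the first `m` points: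
all `2K` endpoints are pairwise distinct, every edge has an admissible color
pair (`good` is `(· ≠ ·)` for bichromatic and `(· = ·)` for monochromatic
matchings), the closed segments are pairwise disjoint, and one common line
meets all of them. -/
def SepMatching (m : ℕ) (p : ℕ → ℝ × ℝ) (c : ℕ → Bool) (good : Bool → Bool → Prop)
    (K : ℕ) (e : ℕ → ℕ × ℕ) : Prop :=
  (∀ i, i < K → (e i).1 < m ∧ (e i).2 < m) ∧
  (∀ i, i < K → good (c (e i).1) (c (e i).2)) ∧
  (∀ i j : ℕ, ∀ s t : Bool, i < K → j < K → (i, s) ≠ (j, t) → ep (e i) s ≠ ep (e j) t) ∧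
  (∀ i j, i < K → j < K → i ≠ j → Disjoint (seg p (e i)) (seg p (e j))) ∧
  ∃ L, IsLine L ∧ ∀ i, i < K → (seg p (e i) ∩ L).Nonempty

/-- `q 0, …, q (L-1)` is a non-crossing alternating path on the first `m`
points: pairwise distinct points, consecutive points of different colors, and
the relative interiors (open segments) of any two edges are disjoint. -/
def AltPath (m : ℕ) (p : ℕ → ℝ × ℝ) (c : ℕ → Bool) (L : ℕ) (q : ℕ → ℕ) : Prop :=
  (∀ i, i < L → q i < m) ∧
  (∀ i j, i < L → j < L → q i = q j → i = j) ∧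
  (∀ i, i + 1 < L → c (q i) ≠ c (q (i + 1))) ∧
  (∀ i j, i + 1 < L → j + 1 < L → i ≠ j →
    Disjoint (openSegment ℝ (p (q i)) (p (q (i + 1))))
      (openSegment ℝ (p (q j)) (p (q (j + 1)))))

/-- Starting position of the `i`-th consecutive block with lengths `len`. -/
def blockStart (len : ℕ → ℕ) (i : ℕ) : ℕ := ∑ j ∈ Finset.range i, len j

/-- The `i`-th consecutive block (as a set of indices). -/
def block (len : ℕ → ℕ) (i : ℕ) : Finset ℕ :=
  Finset.Ico (blockStart len i) (blockStart len i + len i)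

/-- The `i`-th consecutive cyclic block modulo `m`, starting at offset `s0`. -/
def cblock (m s0 : ℕ) (len : ℕ → ℕ) (i : ℕ) : Finset ℕ :=
  (Finset.Ico (s0 + blockStart len i) (s0 + blockStart len i + len i)).image (· % m)

/-- A `(k,0)`-partition of the cyclically colored point set `{0, …, 2n-1}`:
starting from the point `0`, greedily take minimal `k`-chunks (consecutive
blocks with exactly `k` points of one color — the chunk's color — fewer than
`k` of the other color, and ending at a point of the chunk's color); the
remaining uncovered points contain fewer than `k` points of each color. -/
structure KZeroPartition (n k : ℕ) (c : ℕ → Bool) where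
  t : ℕ
  len : ℕ → ℕ
  col : ℕ → Bool
  covered : blockStart len t ≤ 2 * n
  exact_maj : ∀ i, i < t → cnt c (col i) (block len i) = k
  lt_min : ∀ i, i < t → cnt c (!(col i)) (block len i) < k
  len_pos : ∀ i, i < t → 0 < len i
  last_col : ∀ i, i < t → c (blockStart len i + len i - 1) = col i
  unc_true : cnt c true (Finset.Ico (blockStart len t) (2 * n)) < k
  unc_false : cnt c false (Finset.Ico (blockStart len t) (2 * n)) < k

namespace KZeroPartition

variable {n k : ℕ} {c : ℕ → Bool}

/-- Number of red chunks. -/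
def nR (Γ : KZeroPartition n k c) : ℕ :=
  ((Finset.range Γ.t).filter fun i => Γ.col i = true).card

/-- Number of blue chunks. -/
def nB (Γ : KZeroPartition n k c) : ℕ :=
  ((Finset.range Γ.t).filter fun i => Γ.col i = false).card

/-- Average index of the chunks of color `b` (`0` if there are none); the
index of a chunk is its number of minority points divided by `k`. -/
def avg (Γ : KZeroPartition n k c) (b : Bool) : ℚ :=
  if ((Finset.range Γ.t).filter fun i => Γ.col i = b).card = 0 then 0
  else (∑ i ∈ (Finset.range Γ.t).filter fun i => Γ.col i = b,
      (cnt c (!b) (block Γ.len i) : ℚ)) /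
    (k * ((Finset.range Γ.t).filter fun i => Γ.col i = b).card)

/-- The index of the partition: the larger of the two average indices. -/
def index (Γ : KZeroPartition n k c) : ℚ := max (Γ.avg true) (Γ.avg false)

end KZeroPartition

/-- A `k`-configuration: a partition of the whole cyclic point set
`{0, …, 2n-1}` into consecutive cyclic `k`-chunks (exactly `k` points of the
chunk's color, fewer than `k` of the other color), with no uncovered points. -/
structure KConfig (n k : ℕ) (c : ℕ → Bool) where
  t : ℕ
  s0 : ℕ
  len : ℕ → ℕ
  col : ℕ → Bool
  covers : blockStart len t = 2 * n
  exact_maj : ∀ i, i < t → cnt c (col i) (cblock (2 * n) s0 len i) = k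
  lt_min : ∀ i, i < t → cnt c (!(col i)) (cblock (2 * n) s0 len i) < k

namespace KConfig

variable {n k : ℕ} {c : ℕ → Bool}

/-- Number of red chunks. -/
def nR (Γ : KConfig n k c) : ℕ :=
  ((Finset.range Γ.t).filter fun i => Γ.col i = true).card

/-- Number of blue chunks. -/
def nB (Γ : KConfig n k c) : ℕ :=
  ((Finset.range Γ.t).filter fun i => Γ.col i = false).card

/-- Number of minority-color points of the `i`-th chunk. -/
def mino (Γ : KConfig n k c) (i : ℕ) : ℕ :=
  cnt c (!(Γ.col i)) (cblock (2 * n) Γ.s0 Γ.len i)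

/-- Average index of the chunks of color `b` (`0` if there are none). -/
def avg (Γ : KConfig n k c) (b : Bool) : ℚ :=
  if ((Finset.range Γ.t).filter fun i => Γ.col i = b).card = 0 then 0
  else (∑ i ∈ (Finset.range Γ.t).filter fun i => Γ.col i = b, (Γ.mino i : ℚ)) /
    (k * ((Finset.range Γ.t).filter fun i => Γ.col i = b).card)

/-- The index of the configuration. -/
def index (Γ : KConfig n k c) : ℚ := max (Γ.avg true) (Γ.avg false)

/-- The max-index color. -/
def maxColor (Γ : KConfig n k c) : Bool :=
  if Γ.avg false ≤ Γ.avg true then true else false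

end KConfig

/-- Number of points of color `b` among the points of the cyclic interval
`[a, x]` (positions taken modulo `m`). -/
def rank (m : ℕ) (c : ℕ → Bool) (b : Bool) (a x : ℕ) : ℕ :=
  cnt c b ((Finset.Ico a (x + 1)).image (· % m))

/-- The middle `(k/3)`-subchunk of the `i`-th chunk of a `k`-configuration:
the (greedy, minimal) second of the three consecutive subchunks containing
exactly `k/3` points of the chunk's color each. -/
def KConfig.midBlock {n k : ℕ} {c : ℕ → Bool} (Γ : KConfig n k c) (i : ℕ) : Finset ℕ :=
  ((Finset.Ico (Γ.s0 + blockStart Γ.len i) (Γ.s0 + blockStart Γ.len i + Γ.len i)).filter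
      fun x =>
        (k / 3 < rank (2 * n) c (Γ.col i) (Γ.s0 + blockStart Γ.len i) x ∨
          (rank (2 * n) c (Γ.col i) (Γ.s0 + blockStart Γ.len i) x = k / 3 ∧
            c (x % (2 * n)) ≠ Γ.col i)) ∧
        (rank (2 * n) c (Γ.col i) (Γ.s0 + blockStart Γ.len i) x < 2 * (k / 3) ∨
          (rank (2 * n) c (Γ.col i) (Γ.s0 + blockStart Γ.len i) x = 2 * (k / 3) ∧
            c (x % (2 * n)) = Γ.col i))).image (· % (2 * n))

/-- Number of runs (maximal constant-color cyclic blocks) of `c` on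
`{0, …, m-1}`, counted as the number of cyclic color changes. -/
def runCount (m : ℕ) (c : ℕ → Bool) : ℕ :=
  ((Finset.range m).filter fun i => c i ≠ c ((i + 1) % m)).card

/-- `a` enumerates `L` cyclically increasing positions of a circular word of
length `m`: strictly increasing and contained in one window of length `m`. -/
def CircSubseq (m L : ℕ) (a : ℕ → ℕ) : Prop :=
  (∀ i j, i < j → j < L → a i < a j) ∧ ∀ i, i < L → a i < a 0 + m

/-- The circular word `w` (of length `m`) has an antipalindromic subsequence
of length `L`. -/
def HasAntipalSubseq (m : ℕ) (w : ℕ → Bool) (L : ℕ) : Prop :=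
  ∃ a : ℕ → ℕ, CircSubseq m L a ∧ ∀ i, i < L → w (a i % m) ≠ w (a (L - 1 - i) % m)

/-- The circular word `w` (of length `m`) has a palindromic subsequence of
length `L`. -/
def HasPalSubseq (m : ℕ) (w : ℕ → Bool) (L : ℕ) : Prop :=
  ∃ a : ℕ → ℕ, CircSubseq m L a ∧ ∀ i, i < L → w (a i % m) = w (a (L - 1 - i) % m)

/-- A set of index pairs forms a separated set of segments among the first `m`
points: pairwise disjoint segments met by a common line. -/
def SepMatchSet (m : ℕ) (p : ℕ → ℝ × ℝ) (S : Set (ℕ × ℕ)) : Prop :=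
  (∀ e ∈ S, e.1 < m ∧ e.2 < m ∧ e.1 ≠ e.2) ∧
  (∀ e ∈ S, ∀ f ∈ S, e ≠ f → Disjoint (seg p e) (seg p f)) ∧
  ∃ L, IsLine L ∧ ∀ e ∈ S, (seg p e ∩ L).Nonempty

section Aux

lemma cross_cyclic (o a b : ℝ × ℝ) : cross o a b = cross a b o := by
  simp only [cross]; ring

lemma cross_swap (o a b : ℝ × ℝ) : cross o a b = -cross o b a := by
  simp only [cross]; ring

lemma cross_rev (o a b : ℝ × ℝ) : cross o a b = -cross b a o := by
  simp only [cross]; ring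

lemma cross_comb (u v x y : ℝ × ℝ) (a b : ℝ) (hab : a + b = 1) :
    cross u v (a • x + b • y) = a * cross u v x + b * cross u v y := by
  have hb : b = 1 - a := by linarith
  subst hb
  simp only [cross, Prod.smul_fst, Prod.smul_snd, Prod.fst_add, Prod.snd_add, smul_eq_mul]
  ring

lemma cross_self_left (u v : ℝ × ℝ) : cross u v u = 0 := by unfold cross; ring

lemma cross_self_right (u v : ℝ × ℝ) : cross u v v = 0 := by unfold cross; ring

/-- On a closed segment, cross is a convex combination: nonneg endpoints give nonneg. -/
lemma cross_seg_nonneg {u v x y : ℝ × ℝ} (hx : 0 ≤ cross u v x) (hy : 0 ≤ cross u v y)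
    {z : ℝ × ℝ} (hz : z ∈ segment ℝ x y) : 0 ≤ cross u v z := by
  obtain ⟨a, b, ha, hb, hab, rfl⟩ := hz
  rw [cross_comb u v x y a b hab]
  positivity

lemma cross_seg_pos {u v x y : ℝ × ℝ} (hx : 0 < cross u v x) (hy : 0 < cross u v y)
    {z : ℝ × ℝ} (hz : z ∈ segment ℝ x y) : 0 < cross u v z := by
  obtain ⟨a, b, ha, hb, hab, rfl⟩ := hz
  rw [cross_comb u v x y a b hab]
  rcases ha.lt_or_eq with h | h
  · have : 0 ≤ b * cross u v y := by positivity
    nlinarith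
  · have hb1 : b = 1 := by linarith
    rw [← h, hb1]; simpa using hy

lemma cross_openSeg_neg {u v x y : ℝ × ℝ} (hx : cross u v x < 0) (hy : cross u v y ≤ 0)
    {z : ℝ × ℝ} (hz : z ∈ openSegment ℝ x y) : cross u v z < 0 := by
  obtain ⟨a, b, ha, hb, hab, rfl⟩ := hz
  rw [cross_comb u v x y a b hab]
  nlinarith

lemma cross_openSeg_zero {u v x y : ℝ × ℝ} (hx : cross u v x = 0) (hy : cross u v y = 0)
    {z : ℝ × ℝ} (hz : z ∈ openSegment ℝ x y) : cross u v z = 0 := by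
  obtain ⟨a, b, ha, hb, hab, rfl⟩ := hz
  rw [cross_comb u v x y a b hab, hx, hy]; ring

/-- shared-vertex disjointness -/
lemma adj_disjoint {a v b : ℝ × ℝ} (h : cross a v b ≠ 0) :
    Disjoint (openSegment ℝ a v) (openSegment ℝ v b) := by
  rw [Set.disjoint_left]
  intro z hz1 hz2
  have h1 : cross a v z = 0 :=
    cross_openSeg_zero (cross_self_left a v) (cross_self_right a v) hz1
  obtain ⟨s, t, hs, ht, hst, rfl⟩ := hz2
  rw [cross_comb a v v b s t hst, cross_self_right] at h1
  have : cross a v b = 0 := by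
    rcases mul_eq_zero.1 (by linarith : t * cross a v b = 0) with h' | h'
    · exact absurd h' (ne_of_gt ht)
    · exact h'
  exact h this

set_option maxHeartbeats 1000000 in
/-- Interleaved convex quadruple: the two diagonals meet. -/
lemma interleave {x1 x2 x3 x4 : ℝ × ℝ}
    (h123 : cross x1 x2 x3 < 0) (h124 : cross x1 x2 x4 < 0)
    (h134 : cross x1 x3 x4 < 0) (h234 : cross x2 x3 x4 < 0) :
    ∃ z, z ∈ segment ℝ x1 x3 ∧ z ∈ segment ℝ x2 x4 := by
  have c241 : cross x2 x4 x1 < 0 := by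
    have h := cross_cyclic x1 x2 x4
    linarith
  have c243 : 0 < cross x2 x4 x3 := by
    have h : cross x2 x4 x3 = -cross x2 x3 x4 := cross_swap _ _ _
    linarith [h]
  have c132 : 0 < cross x1 x3 x2 := by
    have h : cross x1 x3 x2 = -cross x1 x2 x3 := cross_swap _ _ _
    linarith [h]
  have c134 : cross x1 x3 x4 < 0 := h134
  set t : ℝ := cross x2 x4 x1 / (cross x2 x4 x1 - cross x2 x4 x3) with ht
  set s : ℝ := cross x1 x3 x2 / (cross x1 x3 x2 - cross x1 x3 x4) with hs
  have hd1 : cross x2 x4 x1 - cross x2 x4 x3 < 0 := by linarith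
  have hd2 : 0 < cross x1 x3 x2 - cross x1 x3 x4 := by linarith
  have ht0 : 0 < t := div_pos_of_neg_of_neg c241 hd1
  have ht1 : t < 1 := by
    rw [ht, div_lt_one_of_neg hd1]; linarith
  have hs0 : 0 < s := div_pos c132 hd2
  have hs1 : s < 1 := by
    rw [hs, div_lt_one hd2]; linarith
  refine ⟨(1 - t) • x1 + t • x3, ⟨1 - t, t, by linarith, le_of_lt ht0, by ring, rfl⟩, ?_⟩
  refine ⟨1 - s, s, by linarith, le_of_lt hs0, by ring, ?_⟩
  have hkey : (1 - s) • x2 + s • x4 = (1 - t) • x1 + t • x3 := by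
    have hd1' : cross x2 x4 x1 - cross x2 x4 x3 ≠ 0 := ne_of_lt hd1
    have hd2' : cross x1 x3 x2 - cross x1 x3 x4 ≠ 0 := ne_of_gt hd2
    have key : ∀ a d u w : ℝ, d ≠ 0 → (1 - a / d) * u + (a / d) * w = (d * u + a * (w - u)) / d := by
      intro a d u w hd; field_simp; ring
    have comp : ∀ k : ℝ × ℝ → ℝ, (∀ z w : ℝ × ℝ, k (z + w) = k z + k w) →
        (∀ (r : ℝ) (z : ℝ × ℝ), k (r • z) = r * k z) →
        ((cross x1 x3 x2 - cross x1 x3 x4) * k x2 + cross x1 x3 x2 * (k x4 - k x2)) *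
          (cross x2 x4 x1 - cross x2 x4 x3) =
        ((cross x2 x4 x1 - cross x2 x4 x3) * k x1 + cross x2 x4 x1 * (k x3 - k x1)) *
          (cross x1 x3 x2 - cross x1 x3 x4) →
        k ((1 - s) • x2 + s • x4) = k ((1 - t) • x1 + t • x3) := by
      intro k hadd hsmul hid
      rw [hadd, hadd, hsmul, hsmul, hsmul, hsmul, hs, ht,
        key _ _ _ _ hd2', key _ _ _ _ hd1', div_eq_div_iff hd2' hd1']
      exact hid
    have e1 := comp Prod.fst (fun _ _ => rfl) (fun _ _ => rfl) (by simp only [cross]; ring)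
    have e2 := comp Prod.snd (fun _ _ => rfl) (fun _ _ => rfl) (by simp only [cross]; ring)
    exact Prod.ext e1 e2
  exact hkey


variable {m : ℕ} {p : ℕ → ℝ × ℝ}

/-- cyclic triples are CW -/
lemma cyc_cw (hcw : ConvexCW m p) {a b c : ℕ} (ha : a < m) (hb : b < m) (hc : c < m)
    (h : a < b ∧ b < c ∨ b < c ∧ c < a ∨ c < a ∧ a < b) :
    cross (p a) (p b) (p c) < 0 := by
  rcases h with ⟨h1, h2⟩ | ⟨h1, h2⟩ | ⟨h1, h2⟩
  · exact hcw a b c h1 h2 hc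
  · rw [cross_cyclic]; exact hcw b c a h1 h2 ha
  · rw [cross_cyclic, cross_cyclic]; exact hcw c a b h1 h2 hb

lemma cross_ne (hcw : ConvexCW m p) {a b c : ℕ} (ha : a < m) (hb : b < m) (hc : c < m)
    (hab : a ≠ b) (hac : a ≠ c) (hbc : b ≠ c) : cross (p a) (p b) (p c) ≠ 0 := by
  rcases lt_trichotomy a b with h1 | h1 | h1 <;> [skip; exact absurd h1 hab; skip]
  · rcases lt_trichotomy b c with h2 | h2 | h2 <;> [skip; exact absurd h2 hbc; skip]
    · exact ne_of_lt (hcw a b c h1 h2 hc)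
    · rcases lt_trichotomy a c with h3 | h3 | h3 <;> [skip; exact absurd h3 hac; skip]
      · -- a < c < b
        have := cyc_cw hcw ha hc hb (Or.inl ⟨h3, h2⟩)
        rw [cross_swap] at this; intro h; rw [h] at this; simp at this
      · -- c < a < b
        exact ne_of_lt (cyc_cw hcw ha hb hc (Or.inr (Or.inr ⟨h3, h1⟩)))
  · rcases lt_trichotomy a c with h3 | h3 | h3 <;> [skip; exact absurd h3 hac; skip]
    · -- b < a < c
      have := cyc_cw hcw ha hc hb (Or.inr (Or.inr ⟨h1, h3⟩))
      rw [cross_swap] at this; intro h; rw [h] at this; simp at this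
    · rcases lt_trichotomy b c with h2 | h2 | h2 <;> [skip; exact absurd h2 hbc; skip]
      · -- b < c < a
        exact ne_of_lt (cyc_cw hcw ha hb hc (Or.inr (Or.inl ⟨h2, h3⟩)))
      · -- c < b < a
        have := hcw c b a h2 h1 ha
        rw [cross_rev (p c) (p b) (p a)] at this
        intro h; rw [h] at this; simp at this

/-- p is injective on range m (m ≥ 3) -/
lemma p_inj (hcw : ConvexCW m p) (hm : 3 ≤ m) {a b : ℕ} (ha : a < m) (hb : b < m)
    (hab : a ≠ b) : p a ≠ p b := by
  obtain ⟨c, hc, hca, hcb⟩ : ∃ c, c < m ∧ c ≠ a ∧ c ≠ b := by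
    by_cases h0 : a = 0 ∨ b = 0
    · by_cases h1 : a = 1 ∨ b = 1
      · exact ⟨2, by omega, by omega, by omega⟩
      · exact ⟨1, by omega, by omega, by omega⟩
    · exact ⟨0, by omega, by omega, by omega⟩
  intro h
  have := cross_ne hcw hc ha hb (by omega) (by omega) hab
  apply this
  simp only [cross, h]; ring

/-- rotation formula -/
lemma rot_eq {r x : ℕ} (hr : r < m) (hx : x < m) :
    (x + m - r) % m = if x < r then x + m - r else x - r := by
  split
  · apply Nat.mod_eq_of_lt; omega
  · have : x + m - r = (x - r) + m := by omega
    rw [this, Nat.add_mod_right]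
    exact Nat.mod_eq_of_lt (by omega)

/-- rotated order gives CW -/
lemma rot_cw (hcw : ConvexCW m p) {r a b c : ℕ} (hr : r < m) (ha : a < m) (hb : b < m)
    (hc : c < m) (h1 : (a + m - r) % m < (b + m - r) % m)
    (h2 : (b + m - r) % m < (c + m - r) % m) :
    cross (p a) (p b) (p c) < 0 := by
  simp only [rot_eq hr ha, rot_eq hr hb, rot_eq hr hc] at h1 h2
  apply cyc_cw hcw ha hb hc
  by_cases h3 : a < r <;> by_cases h4 : b < r <;> by_cases h5 : c < r <;>
    simp [h3, h4, h5] at h1 h2 <;> omega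


lemma sumsq_ne {a b : ℝ × ℝ} (hab : a ≠ b) :
    (b.1 - a.1) * (b.1 - a.1) + (b.2 - a.2) * (b.2 - a.2) ≠ 0 := by
  intro h
  have s1 : 0 ≤ (b.1 - a.1) * (b.1 - a.1) := mul_self_nonneg _
  have s2 : 0 ≤ (b.2 - a.2) * (b.2 - a.2) := mul_self_nonneg _
  have h1 : (b.1 - a.1) * (b.1 - a.1) = 0 := by linarith
  have h2 : (b.2 - a.2) * (b.2 - a.2) = 0 := by linarith
  exact hab (Prod.ext (by nlinarith) (by nlinarith)).symm

lemma line_cross_zero {L : Set (ℝ × ℝ)} {a b : ℝ × ℝ}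
    (hL : L = (affineSpan ℝ ({a, b} : Set (ℝ × ℝ)) : Set (ℝ × ℝ)))
    {z : ℝ × ℝ} (hz : z ∈ L) : cross a b z = 0 := by
  rw [hL] at hz
  have hz' : (z - a) +ᵥ a ∈ affineSpan ℝ ({a, b} : Set (ℝ × ℝ)) := by
    simpa using hz
  rw [vadd_left_mem_affineSpan_pair] at hz'
  obtain ⟨r, hr⟩ := hz'
  have h1 : z.1 - a.1 = r * (b.1 - a.1) := by
    have := congrArg Prod.fst hr
    simpa [Prod.smul_fst] using this.symm
  have h2 : z.2 - a.2 = r * (b.2 - a.2) := by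
    have := congrArg Prod.snd hr
    simpa [Prod.smul_snd] using this.symm
  simp only [cross]
  linear_combination (b.1 - a.1) * h2 - (b.2 - a.2) * h1

lemma collinear_of_on_line {a b z1 z2 z3 : ℝ × ℝ} (hab : a ≠ b)
    (h1 : cross a b z1 = 0) (h2 : cross a b z2 = 0) (h3 : cross a b z3 = 0) :
    cross z1 z2 z3 = 0 := by
  have hd := sumsq_ne hab
  simp only [cross] at h1 h2 h3 ⊢
  have key : ((b.1 - a.1) * (b.1 - a.1) + (b.2 - a.2) * (b.2 - a.2)) *
      ((z2.1 - z1.1) * (z3.2 - z1.2) - (z2.2 - z1.2) * (z3.1 - z1.1)) = 0 := by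
    linear_combination
      ((b.1 - a.1) * (z2.1 - z1.1) + (b.2 - a.2) * (z2.2 - z1.2)) * h3 -
      ((b.1 - a.1) * (z2.1 - z1.1) + (b.2 - a.2) * (z2.2 - z1.2)) * h1 -
      ((b.1 - a.1) * (z3.1 - z1.1) + (b.2 - a.2) * (z3.2 - z1.2)) * h2 +
      ((b.1 - a.1) * (z3.1 - z1.1) + (b.2 - a.2) * (z3.2 - z1.2)) * h1
  exact (mul_eq_zero.mp key).resolve_left hd

lemma G_inj_on_line {a b z1 z2 : ℝ × ℝ} (hab : a ≠ b)
    (h1 : cross a b z1 = 0) (h2 : cross a b z2 = 0) (hz : z1 ≠ z2) :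
    (b.1 - a.1) * z1.1 + (b.2 - a.2) * z1.2 ≠ (b.1 - a.1) * z2.1 + (b.2 - a.2) * z2.2 := by
  intro hG
  apply hz
  have hd := sumsq_ne hab
  simp only [cross] at h1 h2
  have e1 : z1.1 = z2.1 := by
    apply mul_left_cancel₀ hd
    linear_combination (b.1 - a.1) * hG - (b.2 - a.2) * h1 + (b.2 - a.2) * h2
  have e2 : z1.2 = z2.2 := by
    apply mul_left_cancel₀ hd
    linear_combination (b.2 - a.2) * hG + (b.1 - a.1) * h1 - (b.1 - a.1) * h2
  exact Prod.ext e1 e2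


lemma sign_choice (ZS : Finset ℕ) (v s : ℕ → ℝ) (hcard : ZS.card ≤ 2)
    (hs : ∀ j ∈ ZS, s j = 1 ∨ s j = -1)
    (hv : ∀ j1 ∈ ZS, ∀ j2 ∈ ZS, j1 ≠ j2 → v j1 ≠ v j2) :
    ∃ σ g0 : ℝ, (σ = 1 ∨ σ = -1) ∧ ∀ j ∈ ZS, 0 < s j * (σ * (v j - g0)) := by
  have h3 : ZS.card = 0 ∨ ZS.card = 1 ∨ ZS.card = 2 := by omega
  rcases h3 with h | h | h
  · refine ⟨1, 0, Or.inl rfl, ?_⟩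
    rw [Finset.card_eq_zero] at h
    simp [h]
  · rw [Finset.card_eq_one] at h
    obtain ⟨j0, rfl⟩ := h
    refine ⟨1, v j0 - s j0, Or.inl rfl, ?_⟩
    intro j hj
    simp only [Finset.mem_singleton] at hj
    subst hj
    rcases hs j (by simp) with h | h <;> rw [h] <;> norm_num
  · rw [Finset.card_eq_two] at h
    obtain ⟨j1, j2, hne, rfl⟩ := h
    have hj1 : j1 ∈ ({j1, j2} : Finset ℕ) := by simp
    have hj2 : j2 ∈ ({j1, j2} : Finset ℕ) := by simp
    have hvne := hv j1 hj1 j2 hj2 hne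
    rcases hs j1 hj1 with h1 | h1 <;> rcases hs j2 hj2 with h2 | h2
    · -- both +1
      refine ⟨1, min (v j1) (v j2) - 1, Or.inl rfl, ?_⟩
      intro j hj
      simp only [Finset.mem_insert, Finset.mem_singleton] at hj
      rcases hj with rfl | rfl <;> rw [‹s j = 1›] <;>
        simp only [one_mul] <;>
        [linarith [min_le_left (v j) (v j2)]; linarith [min_le_right (v j1) (v j)]]
    · -- s j1 = 1, s j2 = -1
      refine ⟨if v j2 < v j1 then 1 else -1, (v j1 + v j2) / 2, ?_, ?_⟩
      · split <;> simp
      · intro j hj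
        have hlt : v j2 < v j1 ∨ v j1 < v j2 := lt_or_gt_of_ne (Ne.symm hvne)
        simp only [Finset.mem_insert, Finset.mem_singleton] at hj
        rcases hj with rfl | rfl
        · rw [h1]; rcases hlt with hl | hl
          · rw [if_pos hl]; nlinarith
          · rw [if_neg (by linarith)]; nlinarith
        · rw [h2]; rcases hlt with hl | hl
          · rw [if_pos hl]; nlinarith
          · rw [if_neg (by linarith)]; nlinarith
    · -- s j1 = -1, s j2 = 1
      refine ⟨if v j1 < v j2 then 1 else -1, (v j1 + v j2) / 2, ?_, ?_⟩
      · split <;> simp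
      · intro j hj
        have hlt : v j2 < v j1 ∨ v j1 < v j2 := lt_or_gt_of_ne (Ne.symm hvne)
        simp only [Finset.mem_insert, Finset.mem_singleton] at hj
        rcases hj with rfl | rfl
        · rw [h1]; rcases hlt with hl | hl
          · rw [if_neg (by linarith)]; nlinarith
          · rw [if_pos hl]; nlinarith
        · rw [h2]; rcases hlt with hl | hl
          · rw [if_neg (by linarith)]; nlinarith
          · rw [if_pos hl]; nlinarith
    · -- both -1
      refine ⟨1, max (v j1) (v j2) + 1, Or.inl rfl, ?_⟩
      intro j hj
      simp only [Finset.mem_insert, Finset.mem_singleton] at hj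
      rcases hj with rfl | rfl <;> rw [‹s j = -1›] <;>
        [nlinarith [le_max_left (v j) (v j2)]; nlinarith [le_max_right (v j1) (v j)]]



lemma cross_seg_neg' {u v x y : ℝ × ℝ} (hx : cross u v x < 0) (hy : cross u v y < 0)
    {z : ℝ × ℝ} (hz : z ∈ segment ℝ x y) : cross u v z < 0 := by
  obtain ⟨a, b, ha, hb, hab, rfl⟩ := hz
  rw [cross_comb u v x y a b hab]
  rcases ha.lt_or_eq with h | h
  · nlinarith [mul_nonneg hb (neg_nonneg.mpr hy.le)]
  · have hb1 : b = 1 := by linarith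
    rw [← h, hb1]; simpa using hy

lemma rot_inj {m r x y : ℕ} (hr : r < m) (hx : x < m) (hy : y < m)
    (h : (x + m - r) % m = (y + m - r) % m) : x = y := by
  rw [rot_eq hr hx, rot_eq hr hy] at h
  split_ifs at h <;> omega

/-- wrapped rotation key -/
def wkey (m r P x : ℕ) : ℕ :=
  if (x + m - r) % m < P then (x + m - r) % m + m else (x + m - r) % m

lemma wkey_inj {m r P x y : ℕ} (hr : r < m) (hx : x < m) (hy : y < m)
    (h : wkey m r P x = wkey m r P y) : x = y := by
  have hmx : (x + m - r) % m < m := Nat.mod_lt _ (by omega)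
  have hmy : (y + m - r) % m < m := Nat.mod_lt _ (by omega)
  simp only [wkey] at h
  split_ifs at h <;> [skip; omega; omega; skip] <;>
    exact rot_inj hr hx hy (by omega)

lemma wkey_cw {m : ℕ} {p : ℕ → ℝ × ℝ} (hcw : ConvexCW m p) {r P a b c : ℕ} (hr : r < m)
    (ha : a < m) (hb : b < m) (hc : c < m)
    (h1 : wkey m r P a < wkey m r P b) (h2 : wkey m r P b < wkey m r P c) :
    cross (p a) (p b) (p c) < 0 := by
  have hma : (a + m - r) % m < m := Nat.mod_lt _ (by omega)
  have hmb : (b + m - r) % m < m := Nat.mod_lt _ (by omega)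
  have hmc : (c + m - r) % m < m := Nat.mod_lt _ (by omega)
  simp only [wkey] at h1 h2
  split_ifs at h1 h2 with w1 w2 w3
  · exact rot_cw hcw hr ha hb hc (by omega) (by omega)
  · omega
  · omega
  · omega
  · -- a unwrapped, b c wrapped : order b c a
    rw [cross_cyclic (p a) (p b) (p c)]
    exact rot_cw hcw hr hb hc ha (by omega) (by omega)
  · omega
  · -- a b unwrapped, c wrapped : order c a b
    rw [cross_cyclic (p a) (p b) (p c), cross_cyclic (p b) (p c) (p a)]
    exact rot_cw hcw hr hc ha hb (by omega) (by omega)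
  · exact rot_cw hcw hr ha hb hc (by omega) (by omega)

lemma strictmono_ge {f : ℕ → ℕ} {K : ℕ} (hf : ∀ j1 j2, j1 < j2 → j2 < K → f j1 < f j2) :
    ∀ j, j < K → j ≤ f j := by
  intro j
  induction j with
  | zero => intro _; omega
  | succ k ih =>
    intro h
    have h1 := hf k (k+1) (by omega) h
    have h2 := ih (by omega)
    omega

end Aux


section Pert

set_option maxHeartbeats 1600000 in
lemma exists_sep_functional {m K : ℕ} {p : ℕ → ℝ × ℝ} (hcw : ConvexCW m p) (hm : 3 ≤ m)
    {e : ℕ → ℕ × ℕ} (hbd : ∀ i, i < K → (e i).1 < m ∧ (e i).2 < m)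
    (hd : ∀ i j : ℕ, ∀ s t : Bool, i < K → j < K → (i, s) ≠ (j, t) → ep (e i) s ≠ ep (e j) t)
    {L : Set (ℝ × ℝ)} (hL : IsLine L) (hmeet : ∀ i, i < K → (seg p (e i) ∩ L).Nonempty)
    (hK : 1 ≤ K) :
    ∃ (F : ℝ × ℝ → ℝ) (A B : ℕ → ℕ),
      (∀ (a b : ℝ) (x y : ℝ × ℝ), a + b = 1 → F (a • x + b • y) = a * F x + b * F y) ∧
      (∀ i, i < K → (A i, B i) = e i ∨ (A i, B i) = ((e i).2, (e i).1)) ∧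
      (∀ i, i < K → 0 < F (p (A i))) ∧
      (∀ i, i < K → F (p (B i)) < 0) := by
  classical
  obtain ⟨α, β, hαβ, hLs⟩ := hL
  have hlab : ∀ i, ∃ ab : ℕ × ℕ, i < K →
      ((ab = e i ∨ ab = ((e i).2, (e i).1)) ∧
        0 ≤ cross α β (p ab.1) ∧ cross α β (p ab.2) ≤ 0) := by
    intro i
    by_cases hi : i < K
    · obtain ⟨z, hz1, hz2⟩ := hmeet i hi
      have hz0 : cross α β z = 0 := line_cross_zero hLs hz2
      rw [seg] at hz1
      obtain ⟨a, b, ha, hb', hab, rfl⟩ := hz1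
      have hcomb : a * cross α β (p (e i).1) + b * cross α β (p (e i).2) = 0 := by
        rw [← cross_comb α β _ _ a b hab]; exact hz0
      have hnp : ¬(0 < cross α β (p (e i).1) ∧ 0 < cross α β (p (e i).2)) := by
        rintro ⟨h1, h2⟩
        have e1 : a * cross α β (p (e i).1) = 0 := by
          nlinarith [mul_nonneg ha h1.le, mul_nonneg hb' h2.le]
        have e2 : b * cross α β (p (e i).2) = 0 := by
          nlinarith [mul_nonneg ha h1.le, mul_nonneg hb' h2.le]
        have ha0 : a = 0 := by
          rcases mul_eq_zero.mp e1 with h | h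
          · exact h
          · linarith
        have hb0 : b = 0 := by
          rcases mul_eq_zero.mp e2 with h | h
          · exact h
          · linarith
        linarith
      have hnn : ¬(cross α β (p (e i).1) < 0 ∧ cross α β (p (e i).2) < 0) := by
        rintro ⟨h1, h2⟩
        have e1 : a * cross α β (p (e i).1) = 0 := by
          nlinarith [mul_nonneg ha (neg_nonneg.mpr h1.le), mul_nonneg hb' (neg_nonneg.mpr h2.le)]
        have e2 : b * cross α β (p (e i).2) = 0 := by
          nlinarith [mul_nonneg ha (neg_nonneg.mpr h1.le), mul_nonneg hb' (neg_nonneg.mpr h2.le)]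
        have ha0 : a = 0 := by
          rcases mul_eq_zero.mp e1 with h | h
          · exact h
          · linarith
        have hb0 : b = 0 := by
          rcases mul_eq_zero.mp e2 with h | h
          · exact h
          · linarith
        linarith
      by_cases h : 0 ≤ cross α β (p (e i).1) ∧ cross α β (p (e i).2) ≤ 0
      · exact ⟨e i, fun _ => ⟨Or.inl rfl, h.1, h.2⟩⟩
      · refine ⟨((e i).2, (e i).1), fun _ => ⟨Or.inr rfl, ?_, ?_⟩⟩
        · by_cases h1 : 0 ≤ cross α β (p (e i).1)
          · have h2 : ¬ cross α β (p (e i).2) ≤ 0 := fun hc => h ⟨h1, hc⟩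
            push_neg at h2
            exact h2.le
          · push_neg at h1
            by_contra h3
            push_neg at h3
            exact hnn ⟨h1, h3⟩
        · by_cases h1 : 0 ≤ cross α β (p (e i).1)
          · have h2 : ¬ cross α β (p (e i).2) ≤ 0 := fun hc => h ⟨h1, hc⟩
            push_neg at h2
            rcases eq_or_lt_of_le h1 with h4 | h4
            · exact h4.symm.le
            · exact absurd ⟨h4, h2⟩ hnp
          · push_neg at h1
            exact h1.le
    · exact ⟨e i, fun h => absurd h hi⟩
  choose lab hlab using hlab
  set A : ℕ → ℕ := fun i => (lab i).1 with hA
  set B : ℕ → ℕ := fun i => (lab i).2 with hB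
  have hor : ∀ i, i < K → (A i, B i) = e i ∨ (A i, B i) = ((e i).2, (e i).1) := by
    intro i hi
    rcases (hlab i hi).1 with h | h
    · left; rw [hA, hB]; simp only; rw [← h]
    · right; rw [hA, hB]; simp only; rw [← h]
  have hApos : ∀ i, i < K → 0 ≤ cross α β (p (A i)) := fun i hi => (hlab i hi).2.1
  have hBneg : ∀ i, i < K → cross α β (p (B i)) ≤ 0 := fun i hi => (hlab i hi).2.2
  have hslot : ∀ i, i < K → ∃ s : Bool, A i = ep (e i) s ∧ B i = ep (e i) (!s) := by
    intro i hi
    rcases hor i hi with h | h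
    · refine ⟨true, ?_, ?_⟩
      · have := congrArg Prod.fst h; simpa [ep] using this
      · have := congrArg Prod.snd h; simpa [ep] using this
    · refine ⟨false, ?_, ?_⟩
      · have := congrArg Prod.fst h; simpa [ep] using this
      · have := congrArg Prod.snd h; simpa [ep] using this
  set AB : ℕ → ℕ := fun j => if j < K then A j else B (j - K) with hAB
  have hABA : ∀ i, i < K → AB i = A i := by
    intro i hi; rw [hAB]; simp only; rw [if_pos hi]
  have hABB : ∀ i, i < K → AB (K + i) = B i := by
    intro i hi; rw [hAB]; simp only
    rw [if_neg (by omega)]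
    congr 1
    omega
  have hABlt : ∀ j, j < 2*K → AB j < m := by
    intro j hj
    rw [hAB]; simp only
    split
    · next hjK =>
      obtain ⟨s, hs1, _⟩ := hslot j hjK
      rw [hs1]
      cases s
      · simpa [ep] using (hbd j hjK).2
      · simpa [ep] using (hbd j hjK).1
    · next hjK =>
      have hjK' : j - K < K := by omega
      obtain ⟨s, _, hs2⟩ := hslot (j - K) hjK'
      rw [hs2]
      cases s
      · simpa [ep] using (hbd (j-K) hjK').1
      · simpa [ep] using (hbd (j-K) hjK').2
  have hABinj : ∀ j1, j1 < 2*K → ∀ j2, j2 < 2*K → j1 ≠ j2 → AB j1 ≠ AB j2 := by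
    have rep : ∀ j, j < 2*K → ∃ (i : ℕ) (s : Bool), i < K ∧ AB j = ep (e i) s ∧
        ((j < K ∧ i = j ∧ (A i = ep (e i) s)) ∨ (¬ j < K ∧ i = j - K ∧ B i = ep (e i) s)) := by
      intro j hj
      by_cases hjK : j < K
      · obtain ⟨s, hs1, _⟩ := hslot j hjK
        refine ⟨j, s, hjK, ?_, Or.inl ⟨hjK, rfl, hs1⟩⟩
        rw [hABA j hjK, hs1]
      · have hjK' : j - K < K := by omega
        obtain ⟨s, _, hs2⟩ := hslot (j - K) hjK'
        refine ⟨j - K, !s, hjK', ?_, Or.inr ⟨hjK, rfl, hs2⟩⟩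
        have : AB j = B (j - K) := by
          rw [hAB]; simp only; rw [if_neg hjK]
        rw [this, hs2]
    intro j1 h1 j2 h2 hne
    obtain ⟨i1, s1, hi1, hab1, hc1⟩ := rep j1 h1
    obtain ⟨i2, s2, hi2, hab2, hc2⟩ := rep j2 h2
    rw [hab1, hab2]
    apply hd i1 i2 s1 s2 hi1 hi2
    intro hps
    have hii : i1 = i2 := congrArg Prod.fst hps
    have hss : s1 = s2 := congrArg Prod.snd hps
    rcases hc1 with ⟨hj1K, hij1, hA1⟩ | ⟨hj1K, hij1, hB1⟩ <;>
      rcases hc2 with ⟨hj2K, hij2, hA2⟩ | ⟨hj2K, hij2, hB2⟩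
    · omega
    · -- j1 < K, j2 ≥ K : A i1 = ep (e i1) s1 and B i2 = ep (e i2) s2, i1 = i2, s1 = s2
      obtain ⟨s, hsA, hsB⟩ := hslot i1 hi1
      have e1 : ep (e i1) s = ep (e i1) s1 := by rw [← hsA, hA1]
      have e2 : ep (e i1) (!s) = ep (e i1) s1 := by
        rw [← hsB]
        rw [hii] at hsB ⊢ <;> rw [hB2, hss]
      have hc : ep (e i1) s = ep (e i1) (!s) := by rw [e1, e2]
      have := hd i1 i1 s (!s) hi1 hi1 (by simp)
      exact this hc
    · obtain ⟨s, hsA, hsB⟩ := hslot i1 hi1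
      have e1 : ep (e i1) (!s) = ep (e i1) s1 := by rw [← hsB, hB1]
      have e2 : ep (e i1) s = ep (e i1) s1 := by
        rw [← hsA]
        rw [hii] at hsA ⊢ <;> rw [hA2, hss]
      have hc : ep (e i1) s = ep (e i1) (!s) := by rw [e1, ← e2]
      have := hd i1 i1 s (!s) hi1 hi1 (by simp)
      exact this hc
    · omega
  have hpts : ∀ j1, j1 < 2*K → ∀ j2, j2 < 2*K → j1 ≠ j2 → p (AB j1) ≠ p (AB j2) :=
    fun j1 h1 j2 h2 hne => p_inj hcw hm (hABlt j1 h1) (hABlt j2 h2) (hABinj j1 h1 j2 h2 hne)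
  set Gp : ℕ → ℝ := fun j => (β.1 - α.1) * (p (AB j)).1 + (β.2 - α.2) * (p (AB j)).2 with hGp
  set ZS : Finset ℕ := (Finset.range (2*K)).filter (fun j => cross α β (p (AB j)) = 0) with hZS
  have hZcard : ZS.card ≤ 2 := by
    by_contra hc
    push_neg at hc
    rw [Finset.two_lt_card] at hc
    obtain ⟨a, haZ, b, hbZ, c, hcZ, hab, hac, hbc⟩ := hc
    rw [hZS, Finset.mem_filter, Finset.mem_range] at haZ hbZ hcZ
    exact cross_ne hcw (hABlt a haZ.1) (hABlt b hbZ.1) (hABlt c hcZ.1)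
      (hABinj a haZ.1 b hbZ.1 hab) (hABinj a haZ.1 c hcZ.1 hac) (hABinj b hbZ.1 c hcZ.1 hbc)
      (collinear_of_on_line hαβ haZ.2 hbZ.2 hcZ.2)
  obtain ⟨σ, g0, hσ, hZSsign⟩ := sign_choice ZS Gp (fun j => if j < K then 1 else -1) hZcard
    (by intro j hj; by_cases h : j < K <;> simp [h])
    (by intro j1 h1 j2 h2 hne
        rw [hZS, Finset.mem_filter, Finset.mem_range] at h1 h2
        exact G_inj_on_line hαβ h1.2 h2.2 (hpts j1 h1.1 j2 h2.1 hne))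
  set NS : Finset ℕ := (Finset.range (2*K)).filter (fun j => cross α β (p (AB j)) ≠ 0) with hNS
  set δ : ℝ := if h : NS.Nonempty then
      (NS.image (fun j => |cross α β (p (AB j))|)).min' (h.image _) else 1 with hδ
  have hδpos : 0 < δ := by
    rw [hδ]; split
    · next h =>
      have hmem := Finset.min'_mem (NS.image (fun j => |cross α β (p (AB j))|)) (h.image _)
      rw [Finset.mem_image] at hmem
      obtain ⟨j, hjNS, hje⟩ := hmem
      rw [← hje]
      rw [hNS, Finset.mem_filter] at hjNS
      exact abs_pos.mpr hjNS.2
    · norm_num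
  have hδle : ∀ j, j < 2*K → cross α β (p (AB j)) ≠ 0 → δ ≤ |cross α β (p (AB j))| := by
    intro j hj hne
    have hjNS : j ∈ NS := by rw [hNS, Finset.mem_filter, Finset.mem_range]; exact ⟨hj, hne⟩
    rw [hδ, dif_pos ⟨j, hjNS⟩]
    exact Finset.min'_le _ _ (Finset.mem_image_of_mem _ hjNS)
  have h2K : 0 < 2*K := by omega
  have hrne : (Finset.range (2*K)).Nonempty := ⟨0, Finset.mem_range.mpr h2K⟩
  have hMne : ((Finset.range (2*K)).image (fun j => |Gp j - g0|)).Nonempty :=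
    hrne.image (fun j => |Gp j - g0|)
  set Mv : ℝ := ((Finset.range (2*K)).image (fun j => |Gp j - g0|)).max' hMne with hMv
  have hMle : ∀ j, j < 2*K → |Gp j - g0| ≤ Mv := by
    intro j hj
    rw [hMv]
    exact Finset.le_max' ((Finset.range (2*K)).image (fun j => |Gp j - g0|)) _
      (Finset.mem_image_of_mem (fun j => |Gp j - g0|) (Finset.mem_range.mpr hj))
  have hM0 : 0 ≤ Mv := le_trans (abs_nonneg _) (hMle 0 h2K)
  set ε : ℝ := σ * (δ / (2 * (Mv + 1))) with hε
  have hεabs : |ε| = δ / (2*(Mv+1)) := by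
    rw [hε, abs_mul]
    have : |δ / (2 * (Mv + 1))| = δ / (2 * (Mv + 1)) :=
      abs_of_pos (by positivity)
    rcases hσ with h | h <;> rw [h] <;> simp [this]
  -- main sign estimates, stated for an arbitrary slot
  have hmain : ∀ j, j < 2*K →
      (cross α β (p (AB j)) = 0 → 0 < (if j < K then (1:ℝ) else -1) *
        (cross α β (p (AB j)) + ε * (Gp j - g0))) ∧
      (cross α β (p (AB j)) ≠ 0 → 0 < (cross α β (p (AB j))) *
        (cross α β (p (AB j)) + ε * (Gp j - g0))) := by
    intro j hj
    constructor
    · intro h0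
      have hjZ : j ∈ ZS := by rw [hZS, Finset.mem_filter, Finset.mem_range]; exact ⟨hj, h0⟩
      have hsgn := hZSsign j hjZ
      have hpos : 0 < δ / (2*(Mv+1)) := by positivity
      rw [h0]
      have hε2 : ε * (Gp j - g0) = (δ / (2*(Mv+1))) * (σ * (Gp j - g0)) := by
        rw [hε]; ring
      rw [zero_add, hε2]
      by_cases hjK : j < K
      · rw [if_pos hjK] at hsgn ⊢
        rw [one_mul] at hsgn ⊢
        exact mul_pos hpos hsgn
      · rw [if_neg hjK] at hsgn ⊢
        nlinarith [mul_pos hpos (by nlinarith : 0 < -(σ * (Gp j - g0)))]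
    · intro hne
      have hδφ := hδle j hj hne
      have hGb := hMle j hj
      have key : |ε * (Gp j - g0)| ≤ (δ/(2*(Mv+1))) * Mv := by
        rw [abs_mul, hεabs]
        exact mul_le_mul_of_nonneg_left hGb (by positivity)
      have key2 : (δ/(2*(Mv+1))) * Mv < δ := by
        rw [div_mul_eq_mul_div, div_lt_iff₀ (by positivity)]
        nlinarith
      have habs := neg_abs_le (ε * (Gp j - g0))
      have habs2 := le_abs_self (ε * (Gp j - g0))
      rcases lt_or_gt_of_ne hne with hlt | hgt
      · rw [abs_of_neg hlt] at hδφ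
        nlinarith
      · rw [abs_of_pos hgt] at hδφ
        nlinarith
  refine ⟨fun z => cross α β z + ε * ((β.1 - α.1) * z.1 + (β.2 - α.2) * z.2 - g0), A, B,
    ?_, hor, ?_, ?_⟩
  · intro a b x y hab
    have hb : b = 1 - a := by linarith
    subst hb
    show cross α β _ + _ = _
    rw [cross_comb α β x y a (1-a) (by ring)]
    simp only [Prod.smul_fst, Prod.smul_snd, Prod.fst_add, Prod.snd_add, smul_eq_mul]
    ring
  · intro i hi
    have hABi := hABA i hi
    have hGrw : (β.1 - α.1) * (p (A i)).1 + (β.2 - α.2) * (p (A i)).2 = Gp i := by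
      rw [hGp]; simp only; rw [hABi]
    show 0 < cross α β (p (A i)) + ε * ((β.1 - α.1) * (p (A i)).1 + (β.2 - α.2) * (p (A i)).2 - g0)
    rw [hGrw]
    have hj : i < 2*K := by omega
    rcases eq_or_ne (cross α β (p (A i))) 0 with h0 | hne
    · have := (hmain i hj).1 (by rw [hABi]; exact h0)
      rw [if_pos hi, one_mul, hABi] at this
      exact this
    · have := (hmain i hj).2 (by rw [hABi]; exact hne)
      rw [hABi] at this
      have hpos : 0 < cross α β (p (A i)) := lt_of_le_of_ne (hApos i hi) (Ne.symm hne)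
      nlinarith
  · intro i hi
    have hABi := hABB i hi
    have hGrw : (β.1 - α.1) * (p (B i)).1 + (β.2 - α.2) * (p (B i)).2 = Gp (K + i) := by
      rw [hGp]; simp only; rw [hABi]
    show cross α β (p (B i)) + ε * ((β.1 - α.1) * (p (B i)).1 + (β.2 - α.2) * (p (B i)).2 - g0) < 0
    rw [hGrw]
    have hj : K + i < 2*K := by omega
    rcases eq_or_ne (cross α β (p (B i))) 0 with h0 | hne
    · have := (hmain (K + i) hj).1 (by rw [hABi]; exact h0)
      rw [if_neg (by omega), hABi] at this
      nlinarith
    · have := (hmain (K + i) hj).2 (by rw [hABi]; exact hne)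
      rw [hABi] at this
      have hneg : cross α β (p (B i)) < 0 := lt_of_le_of_ne (hBneg i hi) hne
      nlinarith

end Pert

/-- a separated bichromatic matching with `K` segments yields a
non-crossing alternating path of length `2K`. -/
theorem matching_to_alternating_path
    (n K : ℕ) (p : ℕ → ℝ × ℝ) (c : ℕ → Bool)
    (hcw : ConvexCW (2 * n) p) (hbal : Balanced n c)
    (e : ℕ → ℕ × ℕ) (hM : SepMatching (2 * n) p c (· ≠ ·) K e) :
    ∃ q : ℕ → ℕ, AltPath (2 * n) p c (2 * K) q := by
  classical
  obtain ⟨hbd, hcol, hdist, hdisj, L, hLine, hmeet⟩ := hM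
  rcases Nat.lt_or_ge K 2 with hK2 | hK2
  · -- K = 0 or K = 1
    interval_cases K
    · exact ⟨id, fun i hi => absurd hi (by omega), fun i j hi hj _ => by omega,
        fun i hi => absurd hi (by omega), fun i j hi hj _ => absurd hi (by omega)⟩
    · refine ⟨fun i => if i = 0 then (e 0).1 else (e 0).2, ?_, ?_, ?_, ?_⟩
      · intro i hi
        interval_cases i
        · simpa using (hbd 0 (by omega)).1
        · simpa using (hbd 0 (by omega)).2
      · intro i j hi hj hq
        have hne := hdist 0 0 true false (by omega) (by omega) (by simp)
        simp only [ep] at hne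
        interval_cases i <;> interval_cases j <;> simp_all
      · intro i hi
        have hi0 : i = 0 := by omega
        subst hi0
        simpa using hcol 0 (by omega)
      · intro i j hi hj hne
        exfalso
        omega
  · -- main case : K ≥ 2
    have hm4 : 4 ≤ 2 * n := by
      have h1 := (hbd 0 (by omega)).1
      have h2 := (hbd 0 (by omega)).2
      have h3 := (hbd 1 (by omega)).1
      have h4 := (hbd 1 (by omega)).2
      have d1 := hdist 0 0 true false (by omega) (by omega) (by simp)
      have d2 := hdist 0 1 true true (by omega) (by omega) (by simp)
      have d3 := hdist 0 1 true false (by omega) (by omega) (by simp)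
      have d4 := hdist 0 1 false true (by omega) (by omega) (by simp)
      have d5 := hdist 0 1 false false (by omega) (by omega) (by simp)
      have d6 := hdist 1 1 true false (by omega) (by omega) (by simp)
      simp [ep] at d1 d2 d3 d4 d5 d6
      omega
    have hm3 : 3 ≤ 2 * n := by omega
    have hm0 : 0 < 2 * n := by omega
    obtain ⟨F, A, B, haff, hor, hFA, hFB⟩ :=
      exists_sep_functional hcw hm3 hbd hdist hLine hmeet (by omega)
    have hslot : ∀ i, i < K → ∃ s : Bool, A i = ep (e i) s ∧ B i = ep (e i) (!s) := by
      intro i hi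
      rcases hor i hi with h | h
      · refine ⟨true, ?_, ?_⟩
        · have := congrArg Prod.fst h; simpa [ep] using this
        · have := congrArg Prod.snd h; simpa [ep] using this
      · refine ⟨false, ?_, ?_⟩
        · have := congrArg Prod.fst h; simpa [ep] using this
        · have := congrArg Prod.snd h; simpa [ep] using this
    set AB : ℕ → ℕ := fun j => if j < K then A j else B (j - K) with hAB
    have hABA : ∀ i, i < K → AB i = A i := by
      intro i hi; rw [hAB]; simp only; rw [if_pos hi]
    have hABB : ∀ i, i < K → AB (K + i) = B i := by
      intro i hi; rw [hAB]; simp only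
      rw [if_neg (by omega)]
      congr 1
      omega
    have hABlt : ∀ j, j < 2*K → AB j < 2*n := by
      intro j hj
      rw [hAB]; simp only
      split
      · next hjK =>
        obtain ⟨s, hs1, _⟩ := hslot j hjK
        rw [hs1]
        cases s
        · simpa [ep] using (hbd j hjK).2
        · simpa [ep] using (hbd j hjK).1
      · next hjK =>
        have hjK' : j - K < K := by omega
        obtain ⟨s, _, hs2⟩ := hslot (j - K) hjK'
        rw [hs2]
        cases s
        · simpa [ep] using (hbd (j-K) hjK').1
        · simpa [ep] using (hbd (j-K) hjK').2
    have hABinj : ∀ j1, j1 < 2*K → ∀ j2, j2 < 2*K → j1 ≠ j2 → AB j1 ≠ AB j2 := by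
      have rep : ∀ j, j < 2*K → ∃ (i : ℕ) (s : Bool), i < K ∧ AB j = ep (e i) s ∧
          ((j < K ∧ i = j ∧ (A i = ep (e i) s)) ∨ (¬ j < K ∧ i = j - K ∧ B i = ep (e i) s)) := by
        intro j hj
        by_cases hjK : j < K
        · obtain ⟨s, hs1, _⟩ := hslot j hjK
          refine ⟨j, s, hjK, ?_, Or.inl ⟨hjK, rfl, hs1⟩⟩
          rw [hABA j hjK, hs1]
        · have hjK' : j - K < K := by omega
          obtain ⟨s, _, hs2⟩ := hslot (j - K) hjK'
          refine ⟨j - K, !s, hjK', ?_, Or.inr ⟨hjK, rfl, hs2⟩⟩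
          have h5 : AB j = B (j - K) := by
            rw [hAB]; simp only; rw [if_neg hjK]
          rw [h5, hs2]
      intro j1 h1 j2 h2 hne
      obtain ⟨i1, s1, hi1, hab1, hc1⟩ := rep j1 h1
      obtain ⟨i2, s2, hi2, hab2, hc2⟩ := rep j2 h2
      rw [hab1, hab2]
      apply hdist i1 i2 s1 s2 hi1 hi2
      intro hps
      have hii : i1 = i2 := congrArg Prod.fst hps
      have hss : s1 = s2 := congrArg Prod.snd hps
      rcases hc1 with ⟨hj1K, hij1, hA1⟩ | ⟨hj1K, hij1, hB1⟩ <;>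
        rcases hc2 with ⟨hj2K, hij2, hA2⟩ | ⟨hj2K, hij2, hB2⟩
      · omega
      · obtain ⟨s, hsA, hsB⟩ := hslot i1 hi1
        have e1 : ep (e i1) s = ep (e i1) s1 := by rw [← hsA, hA1]
        have e2 : ep (e i1) (!s) = ep (e i1) s1 := by
          rw [← hsB]
          rw [hii] at hsB ⊢ <;> rw [hB2, hss]
        have hc : ep (e i1) s = ep (e i1) (!s) := by rw [e1, e2]
        exact hdist i1 i1 s (!s) hi1 hi1 (by simp) hc
      · obtain ⟨s, hsA, hsB⟩ := hslot i1 hi1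
        have e1 : ep (e i1) (!s) = ep (e i1) s1 := by rw [← hsB, hB1]
        have e2 : ep (e i1) s = ep (e i1) s1 := by
          rw [← hsA]
          rw [hii] at hsA ⊢ <;> rw [hA2, hss]
        have hc : ep (e i1) s = ep (e i1) (!s) := by rw [e1, ← e2]
        exact hdist i1 i1 s (!s) hi1 hi1 (by simp) hc
      · omega
    have hAlt : ∀ i, i < K → A i < 2*n := by
      intro i hi
      have := hABlt i (by omega)
      rwa [hABA i hi] at this
    have hBlt : ∀ i, i < K → B i < 2*n := by
      intro i hi
      have := hABlt (K + i) (by omega)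
      rwa [hABB i hi] at this
    have hABval : ∀ i, i < K → ∀ j, j < K → A i ≠ B j := by
      intro i hi j hj
      have h1 : A i = AB i := (hABA i hi).symm
      have h2 : B j = AB (K + j) := (hABB j hj).symm
      rw [h1, h2]
      exact hABinj i (by omega) (K+j) (by omega) (by omega)
    have hAval : ∀ i, i < K → ∀ j, j < K → i ≠ j → A i ≠ A j := by
      intro i hi j hj hne
      have h1 : A i = AB i := (hABA i hi).symm
      have h2 : A j = AB j := (hABA j hj).symm
      rw [h1, h2]
      exact hABinj i (by omega) j (by omega) hne
    have hBval : ∀ i, i < K → ∀ j, j < K → i ≠ j → B i ≠ B j := by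
      intro i hi j hj hne
      have h1 : B i = AB (K + i) := (hABB i hi).symm
      have h2 : B j = AB (K + j) := (hABB j hj).symm
      rw [h1, h2]
      exact hABinj (K+i) (by omega) (K+j) (by omega) (by omega)
    have hseg : ∀ i, i < K → segment ℝ (p (A i)) (p (B i)) = seg p (e i) := by
      intro i hi
      rcases hor i hi with h | h
      · have h1 : A i = (e i).1 := congrArg Prod.fst h
        have h2 : B i = (e i).2 := congrArg Prod.snd h
        rw [h1, h2, seg]
      · have h1 : A i = (e i).2 := congrArg Prod.fst h
        have h2 : B i = (e i).1 := congrArg Prod.snd h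
        rw [h1, h2, seg, segment_symm]
    have hFpos_seg : ∀ x y : ℝ × ℝ, 0 < F x → 0 < F y → ∀ z ∈ segment ℝ x y, 0 < F z := by
      intro x y hx hy z hz
      obtain ⟨a, b, ha, hb, hab, rfl⟩ := hz
      rw [haff a b x y hab]
      rcases ha.lt_or_eq with h | h
      · nlinarith [mul_nonneg hb hy.le]
      · have hb1 : b = 1 := by linarith
        rw [← h, hb1]; simpa using hy
    have hFneg_seg : ∀ x y : ℝ × ℝ, F x < 0 → F y < 0 → ∀ z ∈ segment ℝ x y, F z < 0 := by
      intro x y hx hy z hz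
      obtain ⟨a, b, ha, hb, hab, rfl⟩ := hz
      rw [haff a b x y hab]
      rcases ha.lt_or_eq with h | h
      · nlinarith [mul_nonneg hb (neg_nonneg.mpr hy.le)]
      · have hb1 : b = 1 := by linarith
        rw [← h, hb1]; simpa using hy
    -- rotation setup
    set d0 : ℕ := B 0 with hd0
    have hd0m : d0 < 2*n := hBlt 0 (by omega)
    set r : ℕ := (d0 + 1) % (2*n) with hr
    have hrm : r < 2*n := Nat.mod_lt _ hm0
    set π : ℕ → ℕ := fun x => (x + 2*n - r) % (2*n) with hπ
    have hπlt : ∀ x, π x < 2*n := fun x => Nat.mod_lt _ hm0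
    have hπd0 : π d0 = 2*n - 1 := by
      rw [hπ]; simp only
      rw [rot_eq hrm hd0m]
      by_cases h : d0 + 1 < 2*n
      · have hre : r = d0 + 1 := by rw [hr]; exact Nat.mod_eq_of_lt h
        split_ifs <;> omega
      · have h1 : d0 + 1 = 2*n := by omega
        have hre : r = 0 := by rw [hr, h1, Nat.mod_self]
        split_ifs <;> omega
    have hπinj : ∀ x, x < 2*n → ∀ y, y < 2*n → π x = π y → x = y := by
      intro x hx y hy h
      rw [hπ] at h
      exact rot_inj hrm hx hy h
    have hnoUDU : ∀ iu, iu < K → ∀ id_, id_ < K → ∀ iu', iu' < K →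
        ¬(π (A iu) < π (B id_) ∧ π (B id_) < π (A iu')) := by
      rintro iu hiu id_ hid iu' hiu' ⟨h1, h2⟩
      have h3 : π (A iu') < π d0 := by
        have hne : A iu' ≠ d0 := hABval iu' hiu' 0 (by omega)
        have hle : π (A iu') ≤ 2*n - 1 := by
          have := hπlt (A iu')
          omega
        rcases lt_or_eq_of_le hle with h | h
        · rw [hπd0]; exact h
        · exfalso
          exact hne (hπinj _ (hAlt iu' hiu') _ hd0m (by rw [h, hπd0]))
      simp only [hπ] at h1 h2 h3
      have c123 : cross (p (A iu)) (p (B id_)) (p (A iu')) < 0 :=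
        rot_cw hcw hrm (hAlt iu hiu) (hBlt id_ hid) (hAlt iu' hiu') h1 h2
      have c124 : cross (p (A iu)) (p (B id_)) (p d0) < 0 :=
        rot_cw hcw hrm (hAlt iu hiu) (hBlt id_ hid) hd0m h1 (by omega)
      have c134 : cross (p (A iu)) (p (A iu')) (p d0) < 0 :=
        rot_cw hcw hrm (hAlt iu hiu) (hAlt iu' hiu') hd0m (by omega) h3
      have c234 : cross (p (B id_)) (p (A iu')) (p d0) < 0 :=
        rot_cw hcw hrm (hBlt id_ hid) (hAlt iu' hiu') hd0m h2 h3
      obtain ⟨z, hz1, hz2⟩ := interleave c123 c124 c134 c234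
      have hzpos : 0 < F z := hFpos_seg _ _ (hFA iu hiu) (hFA iu' hiu') z hz1
      have hzneg : F z < 0 := hFneg_seg _ _ (hFB id_ hid) (hFB 0 (by omega)) z hz2
      linarith
    -- minimal A position
    obtain ⟨i0, hi0K, hi0min⟩ := Finset.exists_min_image (Finset.range K)
      (fun i => π (A i)) ⟨0, Finset.mem_range.mpr (by omega)⟩
    rw [Finset.mem_range] at hi0K
    set P : ℕ := π (A i0) with hP
    set κ : ℕ → ℕ := fun x => wkey (2*n) r P x with hκ
    have hUD : ∀ i, i < K → ∀ j, j < K → κ (A i) < κ (B j) := by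
      intro i hi j hj
      have hPle : P ≤ π (A i) := hi0min i (Finset.mem_range.mpr hi)
      have hκA : κ (A i) = π (A i) := by
        have hPle' := hPle
        simp only [hπ] at hPle'
        rw [hκ]; simp only [wkey, hπ]
        rw [if_neg (by omega)]
      by_cases hw : π (B j) < P
      · have hκB : κ (B j) = π (B j) + 2*n := by
          have hw' := hw
          simp only [hπ] at hw'
          rw [hκ]; simp only [wkey, hπ]
          rw [if_pos hw']
        rw [hκA, hκB]
        have := hπlt (A i)
        omega
      · push_neg at hw
        have hne : B j ≠ A i0 := (hABval i0 hi0K j hj).symm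
        have hP2 : P < π (B j) := by
          rcases lt_or_eq_of_le hw with h | h
          · exact h
          · exact absurd (hπinj _ (hAlt i0 hi0K) _ (hBlt j hj) h) (Ne.symm hne)
        have hπlt2 : π (A i) < π (B j) := by
          rcases lt_trichotomy (π (A i)) (π (B j)) with h | h | h
          · exact h
          · exact absurd (hπinj _ (hAlt i hi) _ (hBlt j hj) h)
              (fun hc => hABval i hi j hj hc)
          · exfalso
            exact hnoUDU i0 hi0K j hj i hi ⟨hP2, h⟩
        have hκB : κ (B j) = π (B j) := by
          have hP2' := hP2
          simp only [hπ] at hP2'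
          rw [hκ]; simp only [wkey, hπ]
          rw [if_neg (by omega)]
        rw [hκA, hκB]
        exact hπlt2
    -- the sorted enumeration W
    set g : ℕ → ℕ := fun s => κ (AB s) with hg
    have hκinj : ∀ x, x < 2*n → ∀ y, y < 2*n → κ x = κ y → x = y := by
      intro x hx y hy h
      rw [hκ] at h
      exact wkey_inj hrm hx hy h
    have hginj : ∀ s1, s1 < 2*K → ∀ s2, s2 < 2*K → s1 ≠ s2 → g s1 ≠ g s2 := by
      intro s1 h1 s2 h2 hne hgeq
      exact hABinj s1 h1 s2 h2 hne (hκinj _ (hABlt s1 h1) _ (hABlt s2 h2) hgeq)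
    set V : Finset ℕ := (Finset.range (2*K)).image g with hV
    have hVcard : V.card = 2*K := by
      rw [hV, Finset.card_image_of_injOn, Finset.card_range]
      intro s1 hs1 s2 hs2 heq
      simp only [Finset.coe_range, Set.mem_Iio] at hs1 hs2
      by_contra hne
      exact hginj s1 hs1 s2 hs2 hne heq
    set o := V.orderIsoOfFin hVcard with ho
    set slotOf : ℕ → ℕ := fun jj => if h : jj < 2*K then
        Function.invFunOn g (↑(Finset.range (2*K)) : Set ℕ) ((o ⟨jj, h⟩ : V) : ℕ) else 0
      with hslotOf
    set W : ℕ → ℕ := fun jj => AB (slotOf jj) with hW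
    have hkeyW : ∀ jj, ∀ h : jj < 2*K, slotOf jj < 2*K ∧ g (slotOf jj) = ((o ⟨jj, h⟩ : V) : ℕ) := by
      intro jj h
      obtain ⟨v, hmemv, hveq⟩ : ∃ v : ℕ, v ∈ V ∧ ((o ⟨jj, h⟩ : V) : ℕ) = v :=
        ⟨_, (o ⟨jj, h⟩).2, rfl⟩
      rw [hV, Finset.mem_image] at hmemv
      obtain ⟨s, hs, hgs⟩ := hmemv
      have hex : ∃ a ∈ (↑(Finset.range (2*K)) : Set ℕ), g a = ((o ⟨jj, h⟩ : V) : ℕ) :=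
        ⟨s, by simpa using hs, by rw [hgs, hveq]⟩
      constructor
      · have := Function.invFunOn_mem hex
        rw [hslotOf]; simp only; rw [dif_pos h]
        simpa using this
      · have := Function.invFunOn_eq hex
        rw [hslotOf]; simp only; rw [dif_pos h]
        exact this
    have hWκ : ∀ jj, ∀ h : jj < 2*K, κ (W jj) = ((o ⟨jj, h⟩ : V) : ℕ) := by
      intro jj h
      have := (hkeyW jj h).2
      rw [hW]
      exact this
    have hWmono : ∀ j1 j2, j1 < j2 → j2 < 2*K → κ (W j1) < κ (W j2) := by
      intro j1 j2 h12 h2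
      have h1 : j1 < 2*K := by omega
      rw [hWκ j1 h1, hWκ j2 h2]
      have hlt : (⟨j1, h1⟩ : Fin (2*K)) < ⟨j2, h2⟩ := Fin.mk_lt_mk.mpr h12
      exact Subtype.coe_lt_coe.mpr (o.lt_iff_lt.mpr hlt)
    have hWlt : ∀ j, j < 2*K → W j < 2*n := by
      intro j hj
      rw [hW]
      exact hABlt _ (hkeyW j hj).1
    have hWinj : ∀ j1, j1 < 2*K → ∀ j2, j2 < 2*K → W j1 = W j2 → j1 = j2 := by
      intro j1 h1 j2 h2 heq
      rcases lt_trichotomy j1 j2 with h | h | h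
      · exact absurd (hWmono j1 j2 h h2) (by rw [heq]; omega)
      · exact h
      · exact absurd (hWmono j2 j1 h h1) (by rw [heq]; omega)
    have hWcw : ∀ a b c', a < b → b < c' → c' < 2*K →
        cross (p (W a)) (p (W b)) (p (W c')) < 0 := by
      intro a b c' hab hbc hc
      have h1 := hWmono a b hab (by omega)
      have h2 := hWmono b c' hbc hc
      rw [hκ] at h1 h2
      exact wkey_cw hcw hrm (hWlt a (by omega)) (hWlt b (by omega)) (hWlt c' hc) h1 h2
    have hWsurj : ∀ s, s < 2*K → ∃ j, j < 2*K ∧ W j = AB s := by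
      intro s hs
      have hgs : g s ∈ V := by
        rw [hV]; exact Finset.mem_image_of_mem g (Finset.mem_range.mpr hs)
      obtain ⟨t, ht⟩ := o.surjective ⟨g s, hgs⟩
      refine ⟨t.val, t.isLt, ?_⟩
      have hW1 : κ (W t.val) = g s := by
        rw [hWκ t.val t.isLt]
        have : (⟨t.val, t.isLt⟩ : Fin (2*K)) = t := rfl
        rw [this, ht]
      have hW2 : κ (W t.val) = κ (AB s) := hW1
      exact hκinj _ (hWlt t.val t.isLt) _ (hABlt s hs) hW2
    have hWA : ∀ j, j < K → ∃ i, i < K ∧ W j = A i := by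
      intro j hj
      have hsl := (hkeyW j (by omega)).1
      by_cases h : slotOf j < K
      · refine ⟨slotOf j, h, ?_⟩
        rw [hW]
        exact hABA _ h
      · exfalso
        have hlt2 : ∀ s', s' < K → g s' < g (slotOf j) := by
          intro s' hs'
          have e1 : g s' = κ (A s') := by rw [hg]; simp only; rw [hABA s' hs']
          have e2 : g (slotOf j) = κ (B (slotOf j - K)) := by
            rw [hg]; simp only
            congr 1
            rw [hAB]; simp only; rw [if_neg h]
          rw [e1, e2]
          exact hUD s' hs' _ (by omega)
        have hcount : K ≤ j := by
          have hmemV : ∀ s', g (s' % (2*K)) ∈ V := by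
            intro s'
            rw [hV]
            exact Finset.mem_image_of_mem g (Finset.mem_range.mpr (Nat.mod_lt _ (by omega)))
          have hKle := Finset.card_le_card_of_injOn
            (f := fun s' => ((o.symm ⟨g (s' % (2*K)), hmemV s'⟩ : Fin (2*K))).val)
            (s := Finset.range K) (t := Finset.range j) ?_ ?_
          · simpa using hKle
          · intro s' hs'
            rw [Finset.mem_coe, Finset.mem_range] at hs'
            rw [Finset.mem_coe, Finset.mem_range]
            have hmod : s' % (2*K) = s' := Nat.mod_eq_of_lt (by omega)
            have hoval : (o (o.symm ⟨g (s' % (2*K)), hmemV s'⟩) : ℕ) = g s' := by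
              rw [OrderIso.apply_symm_apply]
              simp [hmod]
            have hlt3 : g s' < ((o ⟨j, by omega⟩ : V) : ℕ) := by
              rw [← (hkeyW j (by omega)).2]
              exact hlt2 s' hs'
            have : (o (o.symm ⟨g (s' % (2*K)), hmemV s'⟩) : ℕ) < ((o ⟨j, by omega⟩ : V) : ℕ) := by
              rw [hoval]; exact hlt3
            have hfin : (o.symm ⟨g (s' % (2*K)), hmemV s'⟩ : Fin (2*K)) < ⟨j, by omega⟩ :=
              o.lt_iff_lt.mp (Subtype.coe_lt_coe.mp this)
            exact hfin
          · intro s1 hs1 s2 hs2 heq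
            simp only [Finset.coe_range, Set.mem_Iio] at hs1 hs2
            have hfin : (o.symm ⟨g (s1 % (2*K)), hmemV s1⟩ : Fin (2*K)) =
                o.symm ⟨g (s2 % (2*K)), hmemV s2⟩ := Fin.ext heq
            have hsub : (⟨g (s1 % (2*K)), hmemV s1⟩ : V) = ⟨g (s2 % (2*K)), hmemV s2⟩ :=
              o.symm.injective hfin
            have hgv : g (s1 % (2*K)) = g (s2 % (2*K)) := congrArg Subtype.val hsub
            rw [Nat.mod_eq_of_lt (by omega : s1 < 2*K), Nat.mod_eq_of_lt (by omega : s2 < 2*K)] at hgv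
            by_contra hne
            exact hginj s1 (by omega) s2 (by omega) hne hgv
        omega
    have hrb : ∀ j, ∃ rbj, j < K → (rbj < 2*K ∧ K ≤ rbj ∧ ∃ i, i < K ∧ W j = A i ∧ W rbj = B i) := by
      intro j
      by_cases hj : j < K
      · obtain ⟨i, hi, hWj⟩ := hWA j hj
        obtain ⟨j', hj', hWj'⟩ := hWsurj (K + i) (by omega)
        have hBi : W j' = B i := by rw [hWj', hABB i hi]
        have hKle : K ≤ j' := by
          by_contra hlt
          push_neg at hlt
          obtain ⟨i2, hi2, hWj2⟩ := hWA j' hlt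
          exact hABval i2 hi2 i hi (by rw [← hWj2, hBi])
        exact ⟨j', fun _ => ⟨hj', hKle, i, hi, hWj, hBi⟩⟩
      · exact ⟨0, fun h => absurd h hj⟩
    choose rb hrb using hrb
    have hrbrev : ∀ j1 j2, j1 < j2 → j2 < K → rb j2 < rb j1 := by
      intro j1 j2 h12 h2
      obtain ⟨hrb1a, hrb1b, i1, hi1, hA1, hB1⟩ := hrb j1 (by omega)
      obtain ⟨hrb2a, hrb2b, i2, hi2, hA2, hB2⟩ := hrb j2 h2
      have hii : i1 ≠ i2 := by
        intro hEq
        have hww : W j1 = W j2 := by rw [hA1, hA2, hEq]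
        have := hWinj j1 (by omega) j2 (by omega) hww
        omega
      have hrbne : rb j1 ≠ rb j2 := by
        intro hEq
        have hww : W (rb j1) = W (rb j2) := by rw [hEq]
        rw [hB1, hB2] at hww
        exact hBval i1 hi1 i2 hi2 hii hww
      by_contra hcon
      push_neg at hcon
      have hlt : rb j1 < rb j2 := by omega
      have c123 := hWcw j1 j2 (rb j1) h12 (by omega) (by omega)
      have c124 := hWcw j1 j2 (rb j2) h12 (by omega) hrb2a
      have c134 := hWcw j1 (rb j1) (rb j2) (by omega) hlt hrb2a
      have c234 := hWcw j2 (rb j1) (rb j2) (by omega) hlt hrb2a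
      obtain ⟨z, hz1, hz2⟩ := interleave c123 c124 c134 c234
      rw [hA1, hB1] at hz1
      rw [hA2, hB2] at hz2
      rw [hseg i1 hi1] at hz1
      rw [hseg i2 hi2] at hz2
      exact Set.disjoint_left.mp (hdisj i1 i2 hi1 hi2 hii) hz1 hz2
    have hrbid : ∀ j, j < K → rb j = 2*K - 1 - j := by
      have hφmono : ∀ j1 j2, j1 < j2 → j2 < K → (2*K - 1 - rb j1) < (2*K - 1 - rb j2) := by
        intro j1 j2 h12 h2
        have ha := hrb j1 (by omega)
        have hb := hrb j2 h2
        have := hrbrev j1 j2 h12 h2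
        omega
      have hge := strictmono_ge hφmono
      have hψmono : ∀ t1 t2, t1 < t2 → t2 < K →
          (K - 1 - (2*K - 1 - rb (K - 1 - t1))) < (K - 1 - (2*K - 1 - rb (K - 1 - t2))) := by
        intro t1 t2 h12 h2
        have ha := hrb (K - 1 - t1) (by omega)
        have hb := hrb (K - 1 - t2) (by omega)
        have := hrbrev (K - 1 - t2) (K - 1 - t1) (by omega) (by omega)
        omega
      have hge2 := strictmono_ge hψmono
      intro j hj
      have h1 := hge j hj
      have h2 := hge2 (K - 1 - j) (by omega)
      have h3 := hrb j hj
      have hjj : K - 1 - (K - 1 - j) = j := by omega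
      rw [hjj] at h2
      omega
    have hpair : ∀ j, j < K → ∃ i, i < K ∧ W j = A i ∧ W (2*K - 1 - j) = B i := by
      intro j hj
      obtain ⟨h1, h2, i, hi, hA1, hB1⟩ := hrb j hj
      exact ⟨i, hi, hA1, by rw [← hrbid j hj]; exact hB1⟩
    have hbich : ∀ j, j < K → c (W j) ≠ c (W (2*K - 1 - j)) := by
      intro j hj
      obtain ⟨i, hi, hA1, hB1⟩ := hpair j hj
      rw [hA1, hB1]
      have hc := hcol i hi
      rcases hor i hi with h | h
      · have e1 : A i = (e i).1 := congrArg Prod.fst h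
        have e2 : B i = (e i).2 := congrArg Prod.snd h
        rw [e1, e2]; exact hc
      · have e1 : A i = (e i).2 := congrArg Prod.fst h
        have e2 : B i = (e i).1 := congrArg Prod.snd h
        rw [e1, e2]; exact (Ne.symm hc)
    -- the path
    set J : ℕ → ℕ := fun i => if c (W (i/2)) = decide (i % 2 = 0) then i/2 else 2*K - 1 - i/2
      with hJ
    set q : ℕ → ℕ := fun i => W (J i) with hq
    have hJpair : ∀ a, a < K →
        (J (2*a) = a ∧ J (2*a+1) = 2*K-1-a) ∨ (J (2*a) = 2*K-1-a ∧ J (2*a+1) = a) := by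
      intro a ha
      have h2a : (2*a)/2 = a := by omega
      have h2a1 : (2*a+1)/2 = a := by omega
      have hm2 : decide ((2*a) % 2 = 0) = true := by
        have h5 : (2*a) % 2 = 0 := by omega
        simp [h5]
      have hm21 : decide ((2*a+1) % 2 = 0) = false := by
        have h5 : (2*a+1) % 2 = 1 := by omega
        simp [h5]
      rw [hJ]; simp only [h2a, h2a1, hm2, hm21]
      cases hcb : c (W a) with
      | true => left; simp
      | false => right; simp
    have hJmem : ∀ i, i < 2*K → J i < 2*K ∧ (J i = i/2 ∨ J i = 2*K - 1 - i/2) := by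
      intro i hi
      have h5 : i/2 < K := by omega
      rw [hJ]; simp only
      split_ifs
      · exact ⟨by omega, Or.inl rfl⟩
      · exact ⟨by omega, Or.inr rfl⟩
    have hqW : ∀ i, q i = W (J i) := fun i => by rw [hq]
    have hqlt : ∀ i, i < 2*K → q i < 2*n := by
      intro i hi
      rw [hqW]
      exact hWlt _ (hJmem i hi).1
    have hqinj : ∀ i, i < 2*K → ∀ j, j < 2*K → q i = q j → i = j := by
      intro i hi j hj hq'
      rw [hqW, hqW] at hq'
      have hJJ : J i = J j := hWinj _ (hJmem i hi).1 _ (hJmem j hj).1 hq'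
      obtain ⟨hJi, hJi2⟩ := hJmem i hi
      obtain ⟨hJj, hJj2⟩ := hJmem j hj
      have hhalf : i/2 = j/2 := by
        rcases hJi2 with h1 | h1 <;> rcases hJj2 with h2 | h2 <;> omega
      by_contra hne
      have ha : i/2 < K := by omega
      have hi2 : i = 2*(i/2) ∨ i = 2*(i/2)+1 := by omega
      have hj3 : j = 2*(i/2) ∨ j = 2*(i/2)+1 := by omega
      rcases hJpair (i/2) ha with ⟨hp1, hp2⟩ | ⟨hp1, hp2⟩ <;>
        rcases hi2 with h3 | h3 <;> rcases hj3 with h4 | h4 <;>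
        (have e1 := congrArg J h3; have e2 := congrArg J h4; omega)
    have hcq : ∀ i, i < 2*K → c (q i) = decide (i % 2 = 0) := by
      intro i hi
      have ha : i/2 < K := by omega
      rw [hqW, hJ]; simp only
      split_ifs with hcond
      · exact hcond
      · have hb := hbich (i/2) ha
        cases h5 : c (W (2*K - 1 - i/2)) <;> cases h6 : c (W (i/2)) <;>
          cases h7 : decide (i % 2 = 0) <;>
          first
            | rfl
            | (rw [h6, h7] at hcond; exact absurd rfl hcond)
            | (rw [h6, h5] at hb; exact absurd rfl hb)
    have hccons : ∀ i, i+1 < 2*K → c (q i) ≠ c (q (i+1)) := by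
      intro i hi
      rw [hcq i (by omega), hcq (i+1) hi]
      have h2 : i % 2 = 0 ∧ (i+1) % 2 = 1 ∨ i % 2 = 1 ∧ (i+1) % 2 = 0 := by omega
      rcases h2 with ⟨h3, h4⟩ | ⟨h3, h4⟩ <;> simp [h3, h4]
    have hSin : ∀ s t v, s < v → v < t → t < 2*K → 0 < cross (p (W s)) (p (W t)) (p (W v)) := by
      intro s t v hsv hvt ht
      have h := hWcw s v t hsv hvt ht
      have h2 := cross_swap (p (W s)) (p (W v)) (p (W t))
      linarith
    have hSout : ∀ s t v, s < t → t < 2*K → v < 2*K → (v < s ∨ t < v) →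
        cross (p (W s)) (p (W t)) (p (W v)) < 0 := by
      intro s t v hst ht hv hcase
      rcases hcase with h | h
      · have h1 := hWcw v s t h hst ht
        have h2 := cross_cyclic (p (W v)) (p (W s)) (p (W t))
        linarith
      · exact hWcw s t v hst h hv
    have hInCl : ∀ s t v, s < t → t < 2*K → s ≤ v → v ≤ t →
        0 ≤ cross (p (W s)) (p (W t)) (p (W v)) := by
      intro s t v hst ht h1 h2
      rcases eq_or_lt_of_le h1 with h3 | h3
      · rw [← h3]
        exact le_of_eq (cross_self_left _ _).symm
      · rcases eq_or_lt_of_le h2 with h4 | h4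
        · rw [h4]
          exact le_of_eq (cross_self_right _ _).symm
        · exact (hSin s t v h3 h4 ht).le
    have hedge : ∀ l, l + 1 < 2*K →
        (l % 2 = 0 → ((J l = l/2 ∧ J (l+1) = 2*K-1-l/2) ∨ (J l = 2*K-1-l/2 ∧ J (l+1) = l/2))) ∧
        (l % 2 = 1 → (J l = l/2 ∨ J l = 2*K-1-l/2) ∧ (J (l+1) = l/2+1 ∨ J (l+1) = 2*K-2-l/2)) := by
      intro l hl
      constructor
      · intro hpar
        have h3 : l = 2*(l/2) := by omega
        rcases hJpair (l/2) (by omega) with ⟨hp1, hp2⟩ | ⟨hp1, hp2⟩ <;>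
          rw [← h3] at hp1 hp2
        · exact Or.inl ⟨hp1, hp2⟩
        · exact Or.inr ⟨hp1, hp2⟩
      · intro hpar
        have h3 : l = 2*(l/2)+1 := by omega
        have h4 : l + 1 = 2*(l/2+1) := by omega
        have hK1 : l/2 + 1 < K := by omega
        constructor
        · rcases hJpair (l/2) (by omega) with ⟨_, hp2⟩ | ⟨_, hp2⟩ <;> rw [← h3] at hp2
          · exact Or.inr hp2
          · exact Or.inl hp2
        · rcases hJpair (l/2+1) hK1 with ⟨hp1, _⟩ | ⟨hp1, _⟩ <;> rw [← h4] at hp1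
          · left
            rw [hp1]
          · right
            rw [hp1]
            omega
    have hdisjE : ∀ i j, i + 1 < 2*K → j + 1 < 2*K → i < j →
        Disjoint (openSegment ℝ (p (q i)) (p (q (i+1))))
          (openSegment ℝ (p (q j)) (p (q (j+1)))) := by
      intro i j hi hj hij
      rcases eq_or_lt_of_le (show i+1 ≤ j by omega) with hadj | hfar
      · -- adjacent
        rw [← hadj]
        apply adj_disjoint
        apply cross_ne hcw (hqlt i (by omega)) (hqlt (i+1) (by omega)) (hqlt (i+1+1) (by omega))
        · intro hc; exact absurd (hqinj i (by omega) (i+1) (by omega) hc) (by omega)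
        · intro hc; exact absurd (hqinj i (by omega) (i+1+1) (by omega) hc) (by omega)
        · intro hc; exact absurd (hqinj (i+1) (by omega) (i+1+1) (by omega) hc) (by omega)
      · -- far apart
        have hpar3 : i % 2 = 0 ∨ (i % 2 = 1 ∧ j % 2 = 0) ∨ (i % 2 = 1 ∧ j % 2 = 1) := by omega
        rcases hpar3 with hpar | ⟨hpar, hparj⟩ | ⟨hpar, hparj⟩
        · -- i even
          have hst : i/2 < 2*K-1-i/2 := by omega
          have ht2 : 2*K-1-i/2 < 2*K := by omega
          have hqi : cross (p (W (i/2))) (p (W (2*K-1-i/2))) (p (q i)) = 0 := by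
            rw [hqW]
            rcases (hedge i hi).1 hpar with ⟨h1, _⟩ | ⟨h1, _⟩ <;> rw [h1]
            · exact cross_self_left _ _
            · exact cross_self_right _ _
          have hqi1 : cross (p (W (i/2))) (p (W (2*K-1-i/2))) (p (q (i+1))) = 0 := by
            rw [hqW]
            rcases (hedge i hi).1 hpar with ⟨_, h1⟩ | ⟨_, h1⟩ <;> rw [h1]
            · exact cross_self_right _ _
            · exact cross_self_left _ _
          have hbounds : (i/2 < J j ∧ J j < 2*K-1-i/2) ∧
              (i/2 < J (j+1) ∧ J (j+1) < 2*K-1-i/2) := by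
            have hjp : j % 2 = 0 ∨ j % 2 = 1 := by omega
            rcases hjp with h5 | h5
            · rcases (hedge j hj).1 h5 with ⟨h6, h7⟩ | ⟨h6, h7⟩ <;> omega
            · obtain ⟨h6, h7⟩ := (hedge j hj).2 h5
              rcases h6 with h6 | h6 <;> rcases h7 with h7 | h7 <;> omega
          have hc1 : 0 < cross (p (W (i/2))) (p (W (2*K-1-i/2))) (p (q j)) := by
            rw [hqW]
            exact hSin _ _ _ hbounds.1.1 hbounds.1.2 ht2
          have hc2 : 0 < cross (p (W (i/2))) (p (W (2*K-1-i/2))) (p (q (j+1))) := by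
            rw [hqW]
            exact hSin _ _ _ hbounds.2.1 hbounds.2.2 ht2
          rw [Set.disjoint_left]
          intro z hz1 hz2
          have h0 : cross (p (W (i/2))) (p (W (2*K-1-i/2))) z = 0 :=
            cross_openSeg_zero hqi hqi1 hz1
          have hp' : 0 < cross (p (W (i/2))) (p (W (2*K-1-i/2))) z :=
            cross_seg_pos hc1 hc2 (openSegment_subset_segment ℝ _ _ hz2)
          rw [h0] at hp'
          exact lt_irrefl _ hp'
        · -- i odd, j even
          have hst : j/2 < 2*K-1-j/2 := by omega
          have ht2 : 2*K-1-j/2 < 2*K := by omega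
          have hqj : cross (p (W (j/2))) (p (W (2*K-1-j/2))) (p (q j)) = 0 := by
            rw [hqW]
            rcases (hedge j hj).1 hparj with ⟨h1, _⟩ | ⟨h1, _⟩ <;> rw [h1]
            · exact cross_self_left _ _
            · exact cross_self_right _ _
          have hqj1 : cross (p (W (j/2))) (p (W (2*K-1-j/2))) (p (q (j+1))) = 0 := by
            rw [hqW]
            rcases (hedge j hj).1 hparj with ⟨_, h1⟩ | ⟨_, h1⟩ <;> rw [h1]
            · exact cross_self_right _ _
            · exact cross_self_left _ _
          have hbounds : (J i < j/2 ∨ 2*K-1-j/2 < J i) ∧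
              (J (i+1) < j/2 ∨ 2*K-1-j/2 < J (i+1)) := by
            obtain ⟨h6, h7⟩ := (hedge i hi).2 hpar
            constructor
            · rcases h6 with h6 | h6 <;> omega
            · rcases h7 with h7 | h7 <;> omega
          have hJilt : J i < 2*K := (hJmem i (by omega)).1
          have hJi1lt : J (i+1) < 2*K := (hJmem (i+1) (by omega)).1
          have hc1 : cross (p (W (j/2))) (p (W (2*K-1-j/2))) (p (q i)) < 0 := by
            rw [hqW]; exact hSout _ _ _ hst ht2 hJilt hbounds.1
          have hc2 : cross (p (W (j/2))) (p (W (2*K-1-j/2))) (p (q (i+1))) < 0 := by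
            rw [hqW]; exact hSout _ _ _ hst ht2 hJi1lt hbounds.2
          rw [Set.disjoint_left]
          intro z hz1 hz2
          have h0 : cross (p (W (j/2))) (p (W (2*K-1-j/2))) z = 0 :=
            cross_openSeg_zero hqj hqj1 hz2
          have hn' : cross (p (W (j/2))) (p (W (2*K-1-j/2))) z < 0 :=
            cross_seg_neg' hc1 hc2 (openSegment_subset_segment ℝ _ _ hz1)
          rw [h0] at hn'
          exact lt_irrefl _ hn'
        · -- both odd
          have hst : i/2+1 < 2*K-2-i/2 := by omega
          have ht2 : 2*K-2-i/2 < 2*K := by omega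
          obtain ⟨h6, h7⟩ := (hedge i hi).2 hpar
          have hJilt : J i < 2*K := (hJmem i (by omega)).1
          have hc1 : cross (p (W (i/2+1))) (p (W (2*K-2-i/2))) (p (q i)) < 0 := by
            rw [hqW]
            refine hSout _ _ _ hst ht2 hJilt ?_
            rcases h6 with h6 | h6 <;> omega
          have hc2 : cross (p (W (i/2+1))) (p (W (2*K-2-i/2))) (p (q (i+1))) ≤ 0 := by
            rw [hqW]
            rcases h7 with h7 | h7 <;> rw [h7]
            · exact le_of_eq (cross_self_left _ _)
            · exact le_of_eq (cross_self_right _ _)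
          obtain ⟨h8, h9⟩ := (hedge j hj).2 hparj
          have hb1 : i/2+1 ≤ J j ∧ J j ≤ 2*K-2-i/2 := by
            rcases h8 with h8 | h8 <;> omega
          have hb2 : i/2+1 ≤ J (j+1) ∧ J (j+1) ≤ 2*K-2-i/2 := by
            rcases h9 with h9 | h9 <;> omega
          have hc3 : 0 ≤ cross (p (W (i/2+1))) (p (W (2*K-2-i/2))) (p (q j)) := by
            rw [hqW]; exact hInCl _ _ _ hst ht2 hb1.1 hb1.2
          have hc4 : 0 ≤ cross (p (W (i/2+1))) (p (W (2*K-2-i/2))) (p (q (j+1))) := by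
            rw [hqW]; exact hInCl _ _ _ hst ht2 hb2.1 hb2.2
          rw [Set.disjoint_left]
          intro z hz1 hz2
          have hneg : cross (p (W (i/2+1))) (p (W (2*K-2-i/2))) z < 0 :=
            cross_openSeg_neg hc1 hc2 hz1
          have hpos : 0 ≤ cross (p (W (i/2+1))) (p (W (2*K-2-i/2))) z :=
            cross_seg_nonneg hc3 hc4 (openSegment_subset_segment ℝ _ _ hz2)
          linarith
    refine ⟨q, ?_, ?_, ?_, ?_⟩
    · intro i hi; exact hqlt i hi
    · intro i j hi hj hqe; exact hqinj i hi j hj hqe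
    · exact hccons
    · intro i j hi hj hne
      rcases lt_or_gt_of_ne hne with h | h
      · exact hdisjE i j hi hj h
      · exact (hdisjE j i hj hi h).symm

end SepMatchPaper
end

section
/- Let \Gamma be a (k,0)-partition of a convex set of n red and n blue points with R red chunks, B blue chunks, and index \alpha (the maximum of the average red index over red chunks and the average blue index over blue chunks). Then R + B >= floor(2n/(2k-1)) >= n/k - 1, max{R,B} > n/(2k) - 1/2, and min{R,B} >= ((1-\alpha)/2) floor(2n/(2k-1)) - (k-1)/k > (1-\alpha) n/(2k) - 2. -/
open scoped BigOperators

namespace SepMatchPaper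

lemma cnt_Ico_split (c : ℕ → Bool) (x : Bool) {a b d : ℕ} (h1 : a ≤ b) (h2 : b ≤ d) :
    cnt c x (Finset.Ico a d) = cnt c x (Finset.Ico a b) + cnt c x (Finset.Ico b d) := by
  unfold cnt
  rw [← Finset.Ico_union_Ico_eq_Ico h1 h2, Finset.filter_union,
    Finset.card_union_of_disjoint
      (Finset.disjoint_filter_filter (Finset.Ico_disjoint_Ico_consecutive a b d))]

lemma cnt_add_cnt_not (c : ℕ → Bool) (b : Bool) (S : Finset ℕ) :
    cnt c b S + cnt c (!b) S = S.card := by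
  unfold cnt
  have : (S.filter fun x => c x = !b) = S.filter fun x => ¬(c x = b) := by
    apply Finset.filter_congr
    intro x _
    cases h : c x <;> cases b <;> simp
  rw [this, Finset.card_filter_add_card_filter_not]

lemma cnt_blocks (c : ℕ → Bool) (x : Bool) (len : ℕ → ℕ) (t : ℕ) :
    cnt c x (Finset.Ico 0 (blockStart len t)) =
      ∑ i ∈ Finset.range t, cnt c x (block len i) := by
  induction t with
  | zero => simp [blockStart, cnt]
  | succ t ih =>
    have hb : blockStart len (t + 1) = blockStart len t + len t := by
      simp [blockStart, Finset.sum_range_succ]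
    rw [hb, Finset.sum_range_succ, ← ih,
      cnt_Ico_split c x (Nat.zero_le _) (Nat.le_add_right _ _)]
    rfl

namespace KZeroPartition
variable {n k : ℕ} {c : ℕ → Bool}

/-- chunks of a given colour -/
def chunks (Γ : KZeroPartition n k c) (b : Bool) : Finset ℕ :=
  (Finset.range Γ.t).filter fun i => Γ.col i = b

/-- total number of minority points in chunks of colour `b` -/
def minoSum (Γ : KZeroPartition n k c) (b : Bool) : ℕ :=
  ∑ i ∈ Γ.chunks b, cnt c (!(Γ.col i)) (block Γ.len i)

lemma filter_not_eq (Γ : KZeroPartition n k c) (b : Bool) :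
    (Finset.range Γ.t).filter (fun i => ¬ Γ.col i = b) = Γ.chunks (!b) := by
  apply Finset.filter_congr
  intro i _
  cases h : Γ.col i <;> cases b <;> simp

lemma card_chunks_add (Γ : KZeroPartition n k c) :
    (Γ.chunks true).card + (Γ.chunks false).card = Γ.t := by
  have := Finset.card_filter_add_card_filter_not
    (s := Finset.range Γ.t) (p := fun i => Γ.col i = true)
  rw [Finset.card_range] at this
  rw [Γ.filter_not_eq true] at this
  exact this

lemma sum_blocks (Γ : KZeroPartition n k c) (b : Bool) :
    (∑ i ∈ Finset.range Γ.t, cnt c b (block Γ.len i))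
      = (Γ.chunks b).card * k + Γ.minoSum (!b) := by
  rw [← Finset.sum_filter_add_sum_filter_not (Finset.range Γ.t) (fun i => Γ.col i = b),
    Γ.filter_not_eq b]
  congr 1
  · have hterm : ∀ i ∈ (Finset.range Γ.t).filter (fun i => Γ.col i = b),
        cnt c b (block Γ.len i) = k := by
      intro i hi
      obtain ⟨hit, hcol⟩ := Finset.mem_filter.mp hi
      rw [← hcol]
      exact Γ.exact_maj i (Finset.mem_range.mp hit)
    rw [Finset.sum_congr rfl hterm, Finset.sum_const, smul_eq_mul]
    rfl
  · apply Finset.sum_congr rfl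
    intro i hi
    obtain ⟨_, hcol⟩ := Finset.mem_filter.mp hi
    rw [hcol, Bool.not_not]

/-- the fundamental counting identity for colour `b` -/
lemma count_eq (Γ : KZeroPartition n k c) (hbal : Balanced n c) (b : Bool) :
    n = (Γ.chunks b).card * k + Γ.minoSum (!b)
      + cnt c b (Finset.Ico (blockStart Γ.len Γ.t) (2 * n)) := by
  have hb : cnt c b (Finset.range (2 * n)) = n := by
    cases b
    · exact hbal.2
    · exact hbal.1
  rw [Finset.range_eq_Ico, cnt_Ico_split c b (Nat.zero_le _) Γ.covered,
    cnt_blocks, Γ.sum_blocks b] at hb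
  omega

lemma avg_eq (Γ : KZeroPartition n k c) (b : Bool) :
    Γ.avg b = if (Γ.chunks b).card = 0 then 0
      else (Γ.minoSum b : ℚ) / (k * (Γ.chunks b).card) := by
  unfold avg minoSum chunks
  split
  · rfl
  · congr 1
    push_cast
    apply Finset.sum_congr rfl
    intro i hi
    obtain ⟨_, hcol⟩ := Finset.mem_filter.mp hi
    rw [hcol]

lemma avg_nonneg (Γ : KZeroPartition n k c) (b : Bool) : 0 ≤ Γ.avg b := by
  rw [Γ.avg_eq b]
  split
  · exact le_rfl
  · positivity

lemma avg_le_one (Γ : KZeroPartition n k c) (b : Bool) : Γ.avg b ≤ 1 := by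
  rw [Γ.avg_eq b]
  split
  · norm_num
  · rename_i h
    rw [div_le_one ?pos]
    case pos =>
      have : 0 < (Γ.chunks b).card := Nat.pos_of_ne_zero h
      have hk : 0 < k := by
        obtain ⟨i, hi⟩ := Finset.card_pos.mp this
        obtain ⟨hit, hcol⟩ := Finset.mem_filter.mp hi
        have := Γ.lt_min i (Finset.mem_range.mp hit)
        omega
      positivity
    have hterm : ∀ i ∈ Γ.chunks b, cnt c (!(Γ.col i)) (block Γ.len i) ≤ k := by
      intro i hi
      obtain ⟨hit, _⟩ := Finset.mem_filter.mp hi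
      exact le_of_lt (Γ.lt_min i (Finset.mem_range.mp hit))
    calc (Γ.minoSum b : ℚ) ≤ ((Γ.chunks b).card * k : ℕ) := by
          exact_mod_cast Finset.sum_le_card_nsmul _ _ k hterm
      _ = k * (Γ.chunks b).card := by push_cast; ring

lemma index_nonneg (Γ : KZeroPartition n k c) : 0 ≤ Γ.index :=
  le_trans (Γ.avg_nonneg true) (le_max_left _ _)

lemma index_le_one (Γ : KZeroPartition n k c) : Γ.index ≤ 1 :=
  max_le (Γ.avg_le_one true) (Γ.avg_le_one false)

lemma avg_le_index (Γ : KZeroPartition n k c) (b : Bool) : Γ.avg b ≤ Γ.index := by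
  cases b
  · exact le_max_right _ _
  · exact le_max_left _ _

lemma minoSum_le (Γ : KZeroPartition n k c) (b : Bool) :
    (Γ.minoSum b : ℚ) ≤ Γ.index * (k * (Γ.chunks b).card) := by
  by_cases h : (Γ.chunks b).card = 0
  · have : Γ.chunks b = ∅ := Finset.card_eq_zero.mp h
    simp [minoSum, this, h]
  · have havg := Γ.avg_le_index b
    rw [Γ.avg_eq b, if_neg h] at havg
    have hk : 0 < k := by
      obtain ⟨i, hi⟩ := Finset.card_pos.mp (Nat.pos_of_ne_zero h)
      obtain ⟨hit, _⟩ := Finset.mem_filter.mp hi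
      have := Γ.lt_min i (Finset.mem_range.mp hit)
      omega
    have hpos : (0:ℚ) < k * (Γ.chunks b).card := by
      have : 0 < (Γ.chunks b).card := Nat.pos_of_ne_zero h
      positivity
    exact (div_le_iff₀ hpos).mp havg

lemma len_eq (Γ : KZeroPartition n k c) (i : ℕ) (hi : i < Γ.t) :
    Γ.len i = k + cnt c (!(Γ.col i)) (block Γ.len i) := by
  have h1 := cnt_add_cnt_not c (Γ.col i) (block Γ.len i)
  rw [Γ.exact_maj i hi] at h1
  have h2 : (block Γ.len i).card = Γ.len i := by
    simp only [block, Nat.card_Ico]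
    omega
  omega

end KZeroPartition

set_option maxHeartbeats 1000000

/-- lower bounds on the numbers of chunks of a `(k,0)`-partition
in terms of its index `α`. -/
theorem kzero_partition_counts
    (n k : ℕ) (c : ℕ → Bool) (hbal : Balanced n c) (Γ : KZeroPartition n k c) :
    ((2 * n) / (2 * k - 1) ≤ Γ.nR + Γ.nB) ∧
    ((n : ℚ) / k - 1 ≤ (((2 * n) / (2 * k - 1) : ℕ) : ℚ)) ∧
    ((n : ℚ) / (2 * k) - 1 / 2 < (max Γ.nR Γ.nB : ℚ)) ∧
    ((1 - Γ.index) / 2 * (((2 * n) / (2 * k - 1) : ℕ) : ℚ) - ((k : ℚ) - 1) / k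
        ≤ (min Γ.nR Γ.nB : ℚ)) ∧
    ((1 - Γ.index) * n / (2 * k) - 2 < (min Γ.nR Γ.nB : ℚ)) := by
  rcases Nat.eq_zero_or_pos k with hk0 | hk
  · exact absurd Γ.unc_true (by omega)
  have hpos : 0 < 2 * k - 1 := by omega
  have hkq : (0:ℚ) < (k:ℚ) := by exact_mod_cast hk
  have hk1 : (1:ℚ) ≤ (k:ℚ) := by exact_mod_cast hk
  -- basic ℕ facts
  have htsum : Γ.nR + Γ.nB = Γ.t := Γ.card_chunks_add
  have hbs_ub : blockStart Γ.len Γ.t + Γ.t ≤ 2 * k * Γ.t := by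
    have hterm : ∀ i ∈ Finset.range Γ.t, Γ.len i + 1 ≤ 2 * k := by
      intro i hi
      have h1 := Γ.len_eq i (Finset.mem_range.mp hi)
      have h2 := Γ.lt_min i (Finset.mem_range.mp hi)
      omega
    calc blockStart Γ.len Γ.t + Γ.t = ∑ i ∈ Finset.range Γ.t, (Γ.len i + 1) := by
          simp [blockStart, Finset.sum_add_distrib]
      _ ≤ ∑ _i ∈ Finset.range Γ.t, 2 * k := Finset.sum_le_sum hterm
      _ = 2 * k * Γ.t := by
          rw [Finset.sum_const, Finset.card_range, smul_eq_mul, mul_comm]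
  have htail : 2 * n + 2 ≤ blockStart Γ.len Γ.t + 2 * k := by
    have h1 := Γ.unc_true
    have h2 := Γ.unc_false
    have hcard := cnt_add_cnt_not c true (Finset.Ico (blockStart Γ.len Γ.t) (2 * n))
    rw [Nat.card_Ico] at hcard
    have := Γ.covered
    simp only [Bool.not_true] at hcard
    omega
  have hlt : 2 * n < (Γ.t + 1) * (2 * k - 1) := by
    have e0 : 2 * k * Γ.t = (2 * k - 1) * Γ.t + Γ.t := by
      have h : 2 * k - 1 + 1 = 2 * k := by omega
      calc 2 * k * Γ.t = (2 * k - 1 + 1) * Γ.t := by rw [h]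
        _ = (2 * k - 1) * Γ.t + Γ.t := by ring
    have e2 : (Γ.t + 1) * (2 * k - 1) = (2 * k - 1) * Γ.t + (2 * k - 1) := by ring
    omega
  have hdiv : (2 * n) / (2 * k - 1) ≤ Γ.t :=
    Nat.lt_succ_iff.mp ((Nat.div_lt_iff_lt_mul hpos).mpr hlt)
  -- claim 2
  have hFub : (n : ℚ) / k - 1 ≤ (((2 * n) / (2 * k - 1) : ℕ) : ℚ) := by
    have hdm := Nat.div_add_mod (2 * n) (2 * k - 1)
    have hm2 : (2 * n) % (2 * k - 1) + 2 ≤ 2 * k := by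
      have := Nat.mod_lt (2 * n) hpos
      omega
    have hdm' : 2 * (n:ℚ) = ((2*k-1 : ℕ):ℚ) * (((2 * n) / (2 * k - 1) : ℕ) : ℚ)
        + (((2 * n) % (2 * k - 1) : ℕ) : ℚ) := by exact_mod_cast hdm.symm
    have hcast : ((2*k-1 : ℕ):ℚ) = 2 * (k:ℚ) - 1 := by
      rw [Nat.cast_sub (by omega : 1 ≤ 2 * k)]
      push_cast
      ring
    have hm2' : (((2 * n) % (2 * k - 1) : ℕ) : ℚ) + 2 ≤ 2 * (k:ℚ) := by exact_mod_cast hm2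
    have hF0 : (0:ℚ) ≤ (((2 * n) / (2 * k - 1) : ℕ) : ℚ) := Nat.cast_nonneg _
    rw [hcast] at hdm'
    rw [sub_le_iff_le_add, div_le_iff₀ hkq]
    nlinarith [hdm', hm2', hF0, hk1]
  -- claim 3
  have hmax : Γ.t ≤ 2 * max Γ.nR Γ.nB := by
    have h1 := le_max_left Γ.nR Γ.nB
    have h2 := le_max_right Γ.nR Γ.nB
    omega
  have claim3 : (n : ℚ) / (2 * k) - 1 / 2 < (max Γ.nR Γ.nB : ℚ) := by
    have hQ1 : (blockStart Γ.len Γ.t : ℚ) + Γ.t ≤ 2 * k * Γ.t := by exact_mod_cast hbs_ub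
    have hQ2 : 2 * (n:ℚ) + 2 ≤ (blockStart Γ.len Γ.t : ℚ) + 2 * k := by exact_mod_cast htail
    have hQ3 : (Γ.t : ℚ) ≤ 2 * max (Γ.nR : ℚ) (Γ.nB : ℚ) := by exact_mod_cast hmax
    have ht0 : (0:ℚ) ≤ (Γ.t : ℚ) := Nat.cast_nonneg _
    have hprod : (k:ℚ) * Γ.t ≤ (k:ℚ) * (2 * max (Γ.nR : ℚ) (Γ.nB : ℚ)) :=
      mul_le_mul_of_nonneg_left hQ3 (le_of_lt hkq)
    rw [sub_lt_iff_lt_add, div_lt_iff₀ (by linarith : (0:ℚ) < 2 * k)]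
    nlinarith [hQ1, hQ2, hprod, hk1, ht0]
  -- claims 4 and 5 (parametric in the minority colour)
  have main : ∀ b : Bool, (Γ.chunks b).card ≤ (Γ.chunks (!b)).card →
      ((1 - Γ.index) / 2 * (((2 * n) / (2 * k - 1) : ℕ) : ℚ) - ((k : ℚ) - 1) / k
          ≤ ((Γ.chunks b).card : ℚ)) ∧
      ((1 - Γ.index) * n / (2 * k) - 2 < ((Γ.chunks b).card : ℚ)) := by
    intro b _hble
    have h_a0 : 0 ≤ Γ.index := Γ.index_nonneg
    have h_a1 : Γ.index ≤ 1 := Γ.index_le_one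
    have hc1 := Γ.count_eq hbal b
    have hc2 := Γ.count_eq hbal (!b)
    rw [Bool.not_not] at hc2
    have hu1 : cnt c b (Finset.Ico (blockStart Γ.len Γ.t) (2 * n)) < k := by
      cases b
      · exact Γ.unc_false
      · exact Γ.unc_true
    -- F1 in ℕ : n + 1 ≤ card b * k + minoSum !b + k
    have hF1n : n + 1 ≤ (Γ.chunks b).card * k + Γ.minoSum (!b) + k := by omega
    have hF1 : (n:ℚ) + 1 ≤ ((Γ.chunks b).card : ℚ) * k + (Γ.minoSum (!b) : ℚ) + k := by
      exact_mod_cast hF1n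
    have hmS : (Γ.minoSum (!b) : ℚ) ≤ Γ.index * (k * ((Γ.chunks (!b)).card : ℚ)) :=
      Γ.minoSum_le (!b)
    have hF1' : (n:ℚ) + 1 ≤ ((Γ.chunks b).card : ℚ) * k
        + Γ.index * (k * ((Γ.chunks (!b)).card : ℚ)) + k := by linarith
    have hF2n : (Γ.chunks (!b)).card * k ≤ n := by omega
    have hF2 : ((Γ.chunks (!b)).card : ℚ) * k ≤ (n:ℚ) := by exact_mod_cast hF2n
    have htb : (Γ.chunks b).card + (Γ.chunks (!b)).card = Γ.t := by
      have h := Γ.card_chunks_add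
      cases b
      · simp only [Bool.not_false]
        omega
      · simp only [Bool.not_true]
        omega
    have hFtn : (2 * n) / (2 * k - 1) ≤ (Γ.chunks b).card + (Γ.chunks (!b)).card := by omega
    have hFt : (((2 * n) / (2 * k - 1) : ℕ) : ℚ)
        ≤ ((Γ.chunks b).card : ℚ) + ((Γ.chunks (!b)).card : ℚ) := by exact_mod_cast hFtn
    set a := Γ.index with ha
    set m : ℚ := ((Γ.chunks b).card : ℚ) with hm
    set M : ℚ := ((Γ.chunks (!b)).card : ℚ) with hM
    have hm0 : 0 ≤ m := Nat.cast_nonneg _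
    have hM0 : 0 ≤ M := Nat.cast_nonneg _
    have hn0 : (0:ℚ) ≤ n := Nat.cast_nonneg _
    have hF0 : (0:ℚ) ≤ (((2 * n) / (2 * k - 1) : ℕ) : ℚ) := Nat.cast_nonneg _
    -- the key quadratic inequality
    have e1 : (1 + a) * ((n:ℚ) + 1) ≤ (1 + a) * (m * k + a * (k * M) + k) :=
      mul_le_mul_of_nonneg_left hF1' (by linarith)
    have e2 : (1 + a ^ 2) * (M * k) ≤ (1 + a ^ 2) * n :=
      mul_le_mul_of_nonneg_left hF2 (by positivity)
    have e3 : 0 ≤ a * (1 - a) * n :=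
      mul_nonneg (mul_nonneg h_a0 (by linarith)) hn0
    have e4 : 0 ≤ (1 - a) * ((k:ℚ) - 1) :=
      mul_nonneg (by linarith) (by linarith)
    have key2 : (1 - a) * ((k:ℚ) * M) ≤ (1 + a) * ((k:ℚ) * m) + 2 * ((k:ℚ) - 1) := by
      linarith [e1, e2, e3, e4]
    have step1 : (1 - a) / 2 * (((2 * n) / (2 * k - 1) : ℕ) : ℚ)
        ≤ (1 - a) / 2 * (m + M) :=
      mul_le_mul_of_nonneg_left hFt (by linarith)
    have hmain : (1 - a) * (m + M) * k ≤ 2 * ((k:ℚ) * m) + 2 * ((k:ℚ) - 1) := by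
      linarith [key2]
    have goalA : (1 - a) / 2 * (((2 * n) / (2 * k - 1) : ℕ) : ℚ) - ((k:ℚ) - 1) / k ≤ m := by
      have e : m + ((k:ℚ) - 1) / k = (2 * ((k:ℚ) * m) + 2 * ((k:ℚ) - 1)) / (2 * k) := by
        field_simp
      have h2 : (1 - a) / 2 * (m + M) - ((k:ℚ) - 1) / k ≤ m := by
        rw [sub_le_iff_le_add, e, le_div_iff₀ (by linarith : (0:ℚ) < 2 * k)]
        linarith [hmain]
      linarith
    refine ⟨goalA, ?_⟩
    have hne : (k:ℚ) ≠ 0 := ne_of_gt hkq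
    have eB : (1 - a) * (n:ℚ) / (2 * k) = (1 - a) / 2 * ((n:ℚ) / k) := by
      field_simp
    have hnk : (n:ℚ) / k ≤ (((2 * n) / (2 * k - 1) : ℕ) : ℚ) + 1 := by linarith [hFub]
    have e5 : (1 - a) / 2 * ((n:ℚ) / k)
        ≤ (1 - a) / 2 * ((((2 * n) / (2 * k - 1) : ℕ) : ℚ) + 1) :=
      mul_le_mul_of_nonneg_left hnk (by linarith)
    have e6 : ((k:ℚ) - 1) / k < 1 := by
      rw [div_lt_one hkq]
      linarith
    rw [eB]
    linarith [goalA, e5, e6]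
  -- assemble
  have mt := main true
  have mf := main false
  simp only [Bool.not_true, Bool.not_false,
    show (Γ.chunks true).card = Γ.nR from rfl,
    show (Γ.chunks false).card = Γ.nB from rfl] at mt mf
  refine ⟨by omega, hFub, claim3, ?_, ?_⟩
  · rcases le_total Γ.nR Γ.nB with hc | hc
    · rw [min_eq_left (by exact_mod_cast hc : (Γ.nR:ℚ) ≤ (Γ.nB:ℚ))]
      exact (mt hc).1
    · rw [min_eq_right (by exact_mod_cast hc : (Γ.nB:ℚ) ≤ (Γ.nR:ℚ))]
      exact (mf hc).1
  · rcases le_total Γ.nR Γ.nB with hc | hc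
    · rw [min_eq_left (by exact_mod_cast hc : (Γ.nR:ℚ) ≤ (Γ.nB:ℚ))]
      exact (mt hc).2
    · rw [min_eq_right (by exact_mod_cast hc : (Γ.nB:ℚ) ≤ (Γ.nR:ℚ))]
      exact (mf hc).2

end SepMatchPaper
end

section
/- Let \Gamma be a k-configuration of a convex point set P with n red and n blue points. If a chunk matching M is chosen uniformly at random among the \ell chunk matchings M_0,...,M_{\ell-1} (where \ell is the number of chunks and M_i pairs chunk C_j with C_{(i-j) mod \ell}), then the expected number of edges of the derived separated bichromatic matching is at least n/2. -/
open scoped BigOperators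

namespace SepMatchPaper

section Aux

lemma blockStart_succ (len : ℕ → ℕ) (i : ℕ) :
    blockStart len (i + 1) = blockStart len i + len i := by
  simp [blockStart, Finset.sum_range_succ]

lemma blockStart_mono (len : ℕ → ℕ) : Monotone (blockStart len) := by
  intro a b hab
  exact Finset.sum_le_sum_of_subset (Finset.range_subset_range.2 hab)

lemma cnt_cblock_eq (m s0 : ℕ) (len : ℕ → ℕ) (i : ℕ) (c : ℕ → Bool) (b : Bool)
    (hle : len i ≤ m) :
    cnt c b (cblock m s0 len i) =
      ∑ x ∈ Finset.Ico (s0 + blockStart len i) (s0 + blockStart len i + len i),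
        (if c (x % m) = b then 1 else 0) := by
  unfold cnt cblock
  rw [Finset.filter_image, Finset.card_image_of_injOn, Finset.card_filter]
  refine (Nat.mod_injOn_Ico (s0 + blockStart len i) m).mono ?_
  refine Set.Subset.trans (Finset.coe_subset.2 (Finset.filter_subset _ _)) ?_
  exact Finset.coe_subset.2 (Finset.Ico_subset_Ico le_rfl (by omega))

lemma sum_blocks (s0 t : ℕ) (len : ℕ → ℕ) (q : ℕ → ℕ) :
    ∑ i ∈ Finset.range t,
        ∑ x ∈ Finset.Ico (s0 + blockStart len i) (s0 + blockStart len i + len i), q x =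
      ∑ x ∈ Finset.Ico s0 (s0 + blockStart len t), q x := by
  induction t with
  | zero => simp [blockStart]
  | succ t ih =>
      rw [Finset.sum_range_succ, ih, blockStart_succ, ← add_assoc]
      exact Finset.sum_Ico_consecutive q (Nat.le_add_right _ _) (Nat.le_add_right _ _)

lemma cnt_range_eq (m s0 : ℕ) (c : ℕ → Bool) (b : Bool) :
    cnt c b (Finset.range m) =
      ∑ x ∈ Finset.Ico s0 (s0 + m), (if c (x % m) = b then 1 else 0) := by
  unfold cnt
  rw [← Nat.image_Ico_mod s0 m, Finset.filter_image, Finset.card_image_of_injOn,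
    Finset.card_filter]
  exact (Nat.mod_injOn_Ico s0 m).mono (Finset.coe_subset.2 (Finset.filter_subset _ _))

lemma sum_cnt_cblock {n k : ℕ} {c : ℕ → Bool} (Γ : KConfig n k c) (b : Bool) :
    ∑ i ∈ Finset.range Γ.t, cnt c b (cblock (2 * n) Γ.s0 Γ.len i) =
      cnt c b (Finset.range (2 * n)) := by
  have hlen : ∀ i ∈ Finset.range Γ.t, Γ.len i ≤ 2 * n := by
    intro i hi
    rw [Finset.mem_range] at hi
    have h1 : blockStart Γ.len (i + 1) ≤ blockStart Γ.len Γ.t := blockStart_mono _ hi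
    rw [blockStart_succ, Γ.covers] at h1
    omega
  rw [Finset.sum_congr rfl fun i hi => cnt_cblock_eq (2 * n) Γ.s0 Γ.len i c b (hlen i hi),
    sum_blocks, Γ.covers, cnt_range_eq (2 * n) Γ.s0]

lemma cnt_cblock_val {n k : ℕ} {c : ℕ → Bool} (Γ : KConfig n k c) (b : Bool)
    (i : ℕ) (hi : i < Γ.t) :
    cnt c b (cblock (2 * n) Γ.s0 Γ.len i) = if Γ.col i = b then k else Γ.mino i := by
  by_cases h : Γ.col i = b
  · rw [if_pos h, ← h]; exact Γ.exact_maj i hi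
  · rw [if_neg h]
    have : b = !(Γ.col i) := by
      cases b <;> cases hcol : Γ.col i <;> simp_all
    rw [this]; rfl

lemma cnt_split {n k : ℕ} {c : ℕ → Bool} (Γ : KConfig n k c) (b : Bool) :
    cnt c b (Finset.range (2 * n)) =
      k * ((Finset.range Γ.t).filter fun i => Γ.col i = b).card +
        ∑ i ∈ (Finset.range Γ.t).filter fun i => ¬(Γ.col i = b), Γ.mino i := by
  rw [← sum_cnt_cblock Γ b,
    ← Finset.sum_filter_add_sum_filter_not (Finset.range Γ.t) (fun i => Γ.col i = b)]
  congr 1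
  · rw [Finset.sum_congr rfl fun i hi => ?_]
    · rw [Finset.sum_const, smul_eq_mul, mul_comm]
    · rw [Finset.mem_filter, Finset.mem_range] at hi
      rw [cnt_cblock_val Γ b i hi.1, if_pos hi.2]
  · refine Finset.sum_congr rfl fun i hi => ?_
    rw [Finset.mem_filter, Finset.mem_range] at hi
    rw [cnt_cblock_val Γ b i hi.1, if_neg hi.2]

lemma sum_shift (t j : ℕ) (hj : j < t) (F : ℕ → ℚ) :
    ∑ i ∈ Finset.range t, F ((i + t - j) % t) = ∑ i ∈ Finset.range t, F i := by
  refine Finset.sum_nbij' (fun i => (i + t - j) % t) (fun i => (i + j) % t)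
    ?_ ?_ ?_ ?_ ?_
  · intro a _; exact Finset.mem_range.2 (Nat.mod_lt _ (by omega))
  · intro a _; exact Finset.mem_range.2 (Nat.mod_lt _ (by omega))
  · intro a ha
    rw [Finset.mem_range] at ha
    show ((a + t - j) % t + j) % t = a
    rw [Nat.mod_add_mod]
    have h1 : a + t - j + j = a + t := by omega
    rw [h1, Nat.add_mod_right, Nat.mod_eq_of_lt ha]
  · intro a ha
    rw [Finset.mem_range] at ha
    show ((a + j) % t + t - j) % t = a
    have h2 : (a + j) % t + t - j = (a + j) % t + (t - j) := by omega
    rw [h2, Nat.mod_add_mod]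
    have h3 : a + j + (t - j) = a + t := by omega
    rw [h3, Nat.add_mod_right, Nat.mod_eq_of_lt ha]
  · intro a _; rfl

end Aux

/-- for a uniformly random chunk matching (`M_i` pairs chunk `j`
with chunk `(i - j) mod ℓ`), the expected number of edges of the derived
separated bichromatic matching (`k` edges for a red–blue pair, the larger of
the minority counts for a same-colored pair, half the minority count for a
chunk matched to itself) is at least `n/2`. -/
theorem random_chunk_matching_expectation
    (n k : ℕ) (c : ℕ → Bool) (hbal : Balanced n c) (Γ : KConfig n k c) :
    (n : ℚ) / 2 ≤
      (∑ i ∈ Finset.range Γ.t, (1 / 2 : ℚ) *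
          ∑ j ∈ Finset.range Γ.t,
            if Γ.col j ≠ Γ.col ((i + Γ.t - j) % Γ.t) then (k : ℚ)
            else max (Γ.mino j : ℚ) (Γ.mino ((i + Γ.t - j) % Γ.t) : ℚ)) / Γ.t := by
  rcases Nat.eq_zero_or_pos Γ.t with h0 | hpos
  · have h2n : 2 * n = 0 := by rw [← Γ.covers, h0]; simp [blockStart]
    have hn : n = 0 := by omega
    simp [h0, hn]
  have htQ : (0 : ℚ) < (Γ.t : ℚ) := by exact_mod_cast hpos
  rw [div_le_div_iff₀ (by norm_num) htQ]
  set t := Γ.t with htdef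
  set FR := (Finset.range t).filter (fun i => Γ.col i = true) with hFRdef
  set FB := (Finset.range t).filter (fun i => Γ.col i = false) with hFBdef
  set R := FR.card with hRdef
  set B := FB.card with hBdef
  set SR := ∑ i ∈ FR, (Γ.mino i : ℚ) with hSRdef
  set SB := ∑ i ∈ FB, (Γ.mino i : ℚ) with hSBdef
  have hnotT : (Finset.range t).filter (fun i => ¬(Γ.col i = true)) = FB := by
    rw [hFBdef]; ext x; simp
  have hnotF : (Finset.range t).filter (fun i => ¬(Γ.col i = false)) = FR := by
    rw [hFRdef]; ext x; simp
  -- balance identities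
  have hAn : n = k * R + ∑ i ∈ FB, Γ.mino i := by
    have h := cnt_split Γ true
    rw [hbal.1, hnotT] at h
    exact h
  have hBn : n = k * B + ∑ i ∈ FR, Γ.mino i := by
    have h := cnt_split Γ false
    rw [hbal.2, hnotF] at h
    exact h
  have hA : (n : ℚ) = k * R + SB := by rw [hSBdef]; exact_mod_cast hAn
  have hB : (n : ℚ) = k * B + SR := by rw [hSRdef]; exact_mod_cast hBn
  have hTn : t = R + B := by
    have h := Finset.card_filter_add_card_filter_not
      (s := Finset.range t) (p := fun i => Γ.col i = true)
    rw [hnotT, Finset.card_range, ← hFRdef] at h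
    omega
  have hT : (t : ℚ) = R + B := by exact_mod_cast hTn
  -- reduce to the double sum
  have hX : (∑ i ∈ Finset.range t, (1 / 2 : ℚ) *
        ∑ j ∈ Finset.range t,
          if Γ.col j ≠ Γ.col ((i + t - j) % t) then (k : ℚ)
          else max (Γ.mino j : ℚ) (Γ.mino ((i + t - j) % t) : ℚ)) * 2 =
      ∑ i ∈ Finset.range t, ∑ j ∈ Finset.range t,
          if Γ.col j ≠ Γ.col ((i + t - j) % t) then (k : ℚ)
          else max (Γ.mino j : ℚ) (Γ.mino ((i + t - j) % t) : ℚ) := by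
    rw [Finset.sum_mul]
    exact Finset.sum_congr rfl fun i _ => by ring
  rw [hX]
  have hswap : (∑ i ∈ Finset.range t, ∑ j ∈ Finset.range t,
        if Γ.col j ≠ Γ.col ((i + t - j) % t) then (k : ℚ)
        else max (Γ.mino j : ℚ) (Γ.mino ((i + t - j) % t) : ℚ)) =
      ∑ j ∈ Finset.range t, ∑ j' ∈ Finset.range t,
        if Γ.col j ≠ Γ.col j' then (k : ℚ)
        else max (Γ.mino j : ℚ) (Γ.mino j' : ℚ) := by
    rw [Finset.sum_comm]
    exact Finset.sum_congr rfl fun j hj =>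
      sum_shift t j (Finset.mem_range.1 hj)
        (fun x => if Γ.col j ≠ Γ.col x then (k : ℚ)
          else max (Γ.mino j : ℚ) (Γ.mino x : ℚ))
  rw [hswap]
  -- lower-bound the double sum by the "averaged" one
  have hpt : ∀ j ∈ Finset.range t, ∀ j' ∈ Finset.range t,
      (if Γ.col j' = Γ.col j then ((Γ.mino j : ℚ) + (Γ.mino j' : ℚ)) / 2 else (k : ℚ)) ≤
        (if Γ.col j ≠ Γ.col j' then (k : ℚ)
          else max (Γ.mino j : ℚ) (Γ.mino j' : ℚ)) := by
    intro j _ j' _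
    by_cases h : Γ.col j' = Γ.col j
    · rw [if_pos h, if_neg (by simp [h])]
      have h1 := le_max_left ((Γ.mino j : ℚ)) ((Γ.mino j' : ℚ))
      have h2 := le_max_right ((Γ.mino j : ℚ)) ((Γ.mino j' : ℚ))
      linarith
    · rw [if_neg h, if_pos (fun hc => h hc.symm)]
  refine le_trans ?_ (Finset.sum_le_sum fun j hj =>
    Finset.sum_le_sum fun j' hj' => hpt j hj j' hj')
  -- compute the averaged double sum exactly
  have hinT : ∀ j ∈ FR,
      (∑ j' ∈ Finset.range t,
        if Γ.col j' = Γ.col j then ((Γ.mino j : ℚ) + (Γ.mino j' : ℚ)) / 2 else (k : ℚ)) =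
      ((R : ℚ) * Γ.mino j + SR) / 2 + k * B := by
    intro j hj
    have hcj : Γ.col j = true := (Finset.mem_filter.1 hj).2
    rw [Finset.sum_ite]
    have e1 : (Finset.range t).filter (fun j' => Γ.col j' = Γ.col j) = FR := by
      rw [hcj, hFRdef]
    have e2 : (Finset.range t).filter (fun j' => ¬(Γ.col j' = Γ.col j)) = FB := by
      rw [hcj]; exact hnotT
    rw [e1, e2, Finset.sum_const, nsmul_eq_mul, ← Finset.sum_div,
      Finset.sum_add_distrib, Finset.sum_const, nsmul_eq_mul, ← hSRdef, ← hRdef, ← hBdef]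
    ring
  have hinF : ∀ j ∈ FB,
      (∑ j' ∈ Finset.range t,
        if Γ.col j' = Γ.col j then ((Γ.mino j : ℚ) + (Γ.mino j' : ℚ)) / 2 else (k : ℚ)) =
      ((B : ℚ) * Γ.mino j + SB) / 2 + k * R := by
    intro j hj
    have hcj : Γ.col j = false := (Finset.mem_filter.1 hj).2
    rw [Finset.sum_ite]
    have e1 : (Finset.range t).filter (fun j' => Γ.col j' = Γ.col j) = FB := by
      rw [hcj, hFBdef]
    have e2 : (Finset.range t).filter (fun j' => ¬(Γ.col j' = Γ.col j)) = FR := by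
      rw [hcj]; exact hnotF
    rw [e1, e2, Finset.sum_const, nsmul_eq_mul, ← Finset.sum_div,
      Finset.sum_add_distrib, Finset.sum_const, nsmul_eq_mul, ← hSBdef, ← hBdef, ← hRdef]
    ring
  have htotal : (∑ j ∈ Finset.range t, ∑ j' ∈ Finset.range t,
      if Γ.col j' = Γ.col j then ((Γ.mino j : ℚ) + (Γ.mino j' : ℚ)) / 2 else (k : ℚ)) =
      (R : ℚ) * SR + (R : ℚ) * (k * B) + ((B : ℚ) * SB + (B : ℚ) * (k * R)) := by
    rw [← Finset.sum_filter_add_sum_filter_not (Finset.range t) (fun j => Γ.col j = true),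
      hnotT, ← hFRdef]
    congr 1
    · rw [Finset.sum_congr rfl hinT, Finset.sum_add_distrib, Finset.sum_const,
        nsmul_eq_mul, ← Finset.sum_div, Finset.sum_add_distrib, ← Finset.mul_sum,
        Finset.sum_const, nsmul_eq_mul, ← hSRdef, ← hRdef]
      ring
    · rw [Finset.sum_congr rfl hinF, Finset.sum_add_distrib, Finset.sum_const,
        nsmul_eq_mul, ← Finset.sum_div, Finset.sum_add_distrib, ← Finset.mul_sum,
        Finset.sum_const, nsmul_eq_mul, ← hSBdef, ← hBdef]
      ring
  rw [htotal]
  have hgoal : (n : ℚ) * t =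
      (R : ℚ) * SR + (R : ℚ) * (k * B) + ((B : ℚ) * SB + (B : ℚ) * (k * R)) := by
    linear_combination (n : ℚ) * hT + (R : ℚ) * hB + (B : ℚ) * hA
  rw [hgoal]

end SepMatchPaper
end

section
/- Let k be even and let \Gamma be a k-configuration of a convex point set with n red and n blue points. For a uniformly random chunk matching M of \Gamma, the expected number of edges in the derived separated monochromatic matching is at least n/2. -/
open scoped BigOperators

namespace SepMatchPaper

section AuxProof

lemma half_le_max (a b : ℚ) : (a + b) / 2 ≤ max a b := by
  rcases le_total a b with h | h
  · rw [max_eq_right h]; linarith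
  · rw [max_eq_left h]; linarith

lemma mod_injOn (m s0 : ℕ) : Set.InjOn (· % m) ↑(Finset.Ico s0 (s0 + m)) := by
  intro x hx y hy hxy
  simp only [Finset.coe_Ico, Set.mem_Ico] at hx hy
  simp only at hxy
  rcases le_total x y with h | h
  · have hd : m ∣ y - x := (Nat.modEq_iff_dvd' h).mp hxy
    rcases Nat.eq_zero_or_pos (y - x) with h0 | h0
    · omega
    · have := Nat.le_of_dvd h0 hd; omega
  · have hd : m ∣ x - y := (Nat.modEq_iff_dvd' h).mp hxy.symm
    rcases Nat.eq_zero_or_pos (x - y) with h0 | h0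
    · omega
    · have := Nat.le_of_dvd h0 hd; omega

lemma blockStart_mono_s16 (len : ℕ → ℕ) {i j : ℕ} (h : i ≤ j) :
    blockStart len i ≤ blockStart len j :=
  Finset.sum_le_sum_of_subset (Finset.range_subset_range.2 h)

lemma sum_filter_Ico (q : ℕ → Prop) [DecidablePred q] (s0 : ℕ) (len : ℕ → ℕ) (t : ℕ) :
    ∑ i ∈ Finset.range t,
        ((Finset.Ico (s0 + blockStart len i) (s0 + blockStart len i + len i)).filter q).card
      = ((Finset.Ico s0 (s0 + blockStart len t)).filter q).card := by
  induction t with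
  | zero => simp [blockStart]
  | succ t ih =>
      rw [Finset.sum_range_succ, ih, blockStart_succ]
      rw [show s0 + (blockStart len t + len t) = s0 + blockStart len t + len t by omega]
      rw [← Finset.Ico_union_Ico_eq_Ico (a := s0) (b := s0 + blockStart len t)
          (c := s0 + blockStart len t + len t) (by omega) (by omega)]
      rw [Finset.filter_union, Finset.card_union_of_disjoint]
      exact Finset.disjoint_filter_filter (Finset.Ico_disjoint_Ico_consecutive _ _ _)

lemma cnt_cblock (m s0 : ℕ) (len : ℕ → ℕ) (i : ℕ) (c : ℕ → Bool) (b : Bool)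
    (hsub : blockStart len i + len i ≤ m) :
    cnt c b (cblock m s0 len i)
      = ((Finset.Ico (s0 + blockStart len i) (s0 + blockStart len i + len i)).filter
          (fun x => c (x % m) = b)).card := by
  unfold cnt cblock
  rw [Finset.filter_image]
  refine Finset.card_image_of_injOn ((mod_injOn m s0).mono ?_)
  intro x hx
  simp only [Finset.coe_filter, Set.mem_setOf_eq, Finset.mem_Ico, Finset.coe_Ico,
    Set.mem_Ico] at hx ⊢
  omega

lemma cnt_sum (m s0 t : ℕ) (len : ℕ → ℕ) (hcov : blockStart len t = m) (hm : 0 < m)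
    (c : ℕ → Bool) (b : Bool) :
    ∑ i ∈ Finset.range t, cnt c b (cblock m s0 len i) = cnt c b (Finset.range m) := by
  have h1 : ∀ i ∈ Finset.range t, cnt c b (cblock m s0 len i)
      = ((Finset.Ico (s0 + blockStart len i) (s0 + blockStart len i + len i)).filter
          (fun x => c (x % m) = b)).card := by
    intro i hi
    refine cnt_cblock m s0 len i c b ?_
    have h2 : blockStart len (i + 1) ≤ blockStart len t :=
      blockStart_mono_s16 len (Finset.mem_range.1 hi)
    rw [blockStart_succ] at h2
    omega
  rw [Finset.sum_congr rfl h1, sum_filter_Ico, hcov]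
  have himg : (Finset.Ico s0 (s0 + m)).image (· % m) = Finset.range m := by
    apply Finset.eq_of_subset_of_card_le
    · intro x hx
      simp only [Finset.mem_image] at hx
      obtain ⟨y, _, rfl⟩ := hx
      exact Finset.mem_range.2 (Nat.mod_lt _ hm)
    · rw [Finset.card_image_of_injOn (mod_injOn m s0), Nat.card_Ico, Finset.card_range]
      omega
  unfold cnt
  rw [← himg, Finset.filter_image]
  refine (Finset.card_image_of_injOn ((mod_injOn m s0).mono ?_)).symm
  intro x hx
  simp only [Finset.coe_filter, Set.mem_setOf_eq, Finset.mem_Ico, Finset.coe_Ico,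
    Set.mem_Ico] at hx ⊢
  omega

lemma pure_alg (k n t Nt Nf St Sf : ℚ) (h1 : n = k * Nt + Sf) (h2 : n = k * Nf + St)
    (ht : (t : ℚ) = Nt + Nf) :
    n * t = k * Nt ^ 2 + k * Nf ^ 2 + Nf * St + Nt * Sf := by
  linear_combination Nt * h1 + Nf * h2 + n * ht

lemma algebra_main (t k n : ℕ) (col : ℕ → Bool) (mino : ℕ → ℕ)
    (key : ∀ b : Bool,
      (n : ℚ) = k * (((Finset.range t).filter fun i => col i = b).card : ℚ) +
        ∑ i ∈ (Finset.range t).filter (fun i => col i = !b), (mino i : ℚ)) :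
    (n : ℚ) * t ≤ ∑ j ∈ Finset.range t, ∑ j' ∈ Finset.range t,
      (if col j = col j' then (k : ℚ) else max (mino j : ℚ) (mino j' : ℚ)) := by
  classical
  have hfn : ∀ b : Bool, (Finset.range t).filter (fun i => ¬ (col i = b))
      = (Finset.range t).filter (fun i => col i = !b) := by
    intro b
    apply Finset.filter_congr
    intro i _
    cases b <;> cases hb : col i <;> simp [hb]
  -- per-row lower bound
  have inner : ∀ b : Bool, ∀ j ∈ (Finset.range t).filter (fun i => col i = b),
      (k : ℚ) * (((Finset.range t).filter fun i => col i = b).card : ℚ) +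
        ((((Finset.range t).filter fun i => col i = !b).card : ℚ) * (mino j : ℚ) +
          ∑ i ∈ (Finset.range t).filter (fun i => col i = !b), (mino i : ℚ)) / 2
      ≤ ∑ j' ∈ Finset.range t,
          (if col j = col j' then (k : ℚ) else max (mino j : ℚ) (mino j' : ℚ)) := by
    intro b j hj
    obtain ⟨hjt, hjb⟩ := Finset.mem_filter.1 hj
    rw [← Finset.sum_filter_add_sum_filter_not (Finset.range t) (fun j' => col j' = col j)]
    have heqf : (Finset.range t).filter (fun j' => col j' = col j)
        = (Finset.range t).filter (fun i => col i = b) := by rw [hjb]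
    have hneqf : (Finset.range t).filter (fun j' => ¬ (col j' = col j))
        = (Finset.range t).filter (fun i => col i = !b) := by rw [hjb, hfn]
    have e1 : ∑ j' ∈ (Finset.range t).filter (fun j' => col j' = col j),
        (if col j = col j' then (k : ℚ) else max (mino j : ℚ) (mino j' : ℚ))
        = (((Finset.range t).filter fun i => col i = b).card : ℚ) * k := by
      rw [Finset.sum_congr rfl (g := fun _ => (k : ℚ))
        (fun x hx => if_pos ((Finset.mem_filter.1 hx).2).symm)]
      rw [Finset.sum_const, nsmul_eq_mul, heqf]
    have e2 : ((((Finset.range t).filter fun i => col i = !b).card : ℚ) * (mino j : ℚ) +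
          ∑ i ∈ (Finset.range t).filter (fun i => col i = !b), (mino i : ℚ)) / 2
        ≤ ∑ j' ∈ (Finset.range t).filter (fun j' => ¬ (col j' = col j)),
            (if col j = col j' then (k : ℚ) else max (mino j : ℚ) (mino j' : ℚ)) := by
      rw [hneqf]
      calc ((((Finset.range t).filter fun i => col i = !b).card : ℚ) * (mino j : ℚ) +
              ∑ i ∈ (Finset.range t).filter (fun i => col i = !b), (mino i : ℚ)) / 2
          = ∑ j' ∈ (Finset.range t).filter (fun i => col i = !b),
              ((mino j : ℚ) + (mino j' : ℚ)) / 2 := by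
            rw [← Finset.sum_div, Finset.sum_add_distrib, Finset.sum_const, nsmul_eq_mul]
        _ ≤ ∑ j' ∈ (Finset.range t).filter (fun i => col i = !b),
              (if col j = col j' then (k : ℚ) else max (mino j : ℚ) (mino j' : ℚ)) := by
            refine Finset.sum_le_sum (fun x hx => ?_)
            have hxb : col x = !b := (Finset.mem_filter.1 hx).2
            rw [if_neg (by rw [hjb, hxb]; cases b <;> simp)]
            exact half_le_max _ _
    linarith [e1, e2]
  -- split the outer sum by color
  rw [← Finset.sum_filter_add_sum_filter_not (Finset.range t) (fun j => col j = true), hfn]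
  simp only [Bool.not_true]
  have comp : ∀ b : Bool,
      ∑ j ∈ (Finset.range t).filter (fun i => col i = b),
        ((k : ℚ) * (((Finset.range t).filter fun i => col i = b).card : ℚ) +
          ((((Finset.range t).filter fun i => col i = !b).card : ℚ) * (mino j : ℚ) +
            ∑ i ∈ (Finset.range t).filter (fun i => col i = !b), (mino i : ℚ)) / 2)
      = (((Finset.range t).filter fun i => col i = b).card : ℚ) *
          ((k : ℚ) * (((Finset.range t).filter fun i => col i = b).card : ℚ)) +
        ((((Finset.range t).filter fun i => col i = !b).card : ℚ) *
            (∑ i ∈ (Finset.range t).filter (fun i => col i = b), (mino i : ℚ)) +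
          (((Finset.range t).filter fun i => col i = b).card : ℚ) *
            (∑ i ∈ (Finset.range t).filter (fun i => col i = !b), (mino i : ℚ))) / 2 := by
    intro b
    rw [Finset.sum_add_distrib, Finset.sum_const, nsmul_eq_mul, ← Finset.sum_div,
      Finset.sum_add_distrib, ← Finset.mul_sum, Finset.sum_const, nsmul_eq_mul]
  have bnd : ∀ b : Bool,
      (((Finset.range t).filter fun i => col i = b).card : ℚ) *
          ((k : ℚ) * (((Finset.range t).filter fun i => col i = b).card : ℚ)) +
        ((((Finset.range t).filter fun i => col i = !b).card : ℚ) *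
            (∑ i ∈ (Finset.range t).filter (fun i => col i = b), (mino i : ℚ)) +
          (((Finset.range t).filter fun i => col i = b).card : ℚ) *
            (∑ i ∈ (Finset.range t).filter (fun i => col i = !b), (mino i : ℚ))) / 2
      ≤ ∑ j ∈ (Finset.range t).filter (fun i => col i = b),
          ∑ j' ∈ Finset.range t,
            (if col j = col j' then (k : ℚ) else max (mino j : ℚ) (mino j' : ℚ)) := by
    intro b
    rw [← comp b]
    exact Finset.sum_le_sum (inner b)
  have hcard : (((Finset.range t).filter fun i => col i = true).card : ℚ) +
      (((Finset.range t).filter fun i => col i = false).card : ℚ) = t := by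
    have := Finset.card_filter_add_card_filter_not
      (s := Finset.range t) (p := fun i => col i = true)
    rw [hfn true] at this
    rw [Finset.card_range] at this
    exact_mod_cast by exact_mod_cast congrArg (Nat.cast : ℕ → ℚ) this
  have keyT := key true
  have keyF := key false
  have halg := pure_alg k n t
    (((Finset.range t).filter fun i => col i = true).card : ℚ)
    (((Finset.range t).filter fun i => col i = false).card : ℚ)
    (∑ i ∈ (Finset.range t).filter (fun i => col i = true), (mino i : ℚ))
    (∑ i ∈ (Finset.range t).filter (fun i => col i = false), (mino i : ℚ))
    (by simpa using keyT) (by simpa using keyF) hcard.symm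
  have b1 := bnd true
  have b2 := bnd false
  simp only [Bool.not_true, Bool.not_false] at b1 b2
  nlinarith [b1, b2, halg]

end AuxProof

/-- monochromatic analogue of the random chunk matching bound,
for even `k`: the expected number of edges of the derived separated
monochromatic matching (`k` edges for same-colored pairs, the larger minority
count for a red–blue pair, `k/2` for a chunk matched to itself) is at least
`n/2`. -/
theorem random_chunk_matching_expectation_mono
    (n k : ℕ) (hk : Even k) (c : ℕ → Bool) (hbal : Balanced n c) (Γ : KConfig n k c) :
    (n : ℚ) / 2 ≤
      (∑ i ∈ Finset.range Γ.t, (1 / 2 : ℚ) *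
          ∑ j ∈ Finset.range Γ.t,
            if Γ.col j = Γ.col ((i + Γ.t - j) % Γ.t) then (k : ℚ)
            else max (Γ.mino j : ℚ) (Γ.mino ((i + Γ.t - j) % Γ.t) : ℚ)) / Γ.t := by
  classical
  rcases Nat.eq_zero_or_pos Γ.t with ht0 | ht
  · have hbs := Γ.covers
    rw [ht0] at hbs
    simp only [blockStart, Finset.range_zero, Finset.sum_empty] at hbs
    have hn : n = 0 := by omega
    subst hn
    rw [ht0]
    norm_num
  · have hk0 : 0 < k := by
      have h1 := Γ.lt_min 0 ht
      omega
    have hlen0 : 0 < Γ.len 0 := by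
      by_contra h
      have h0 : Γ.len 0 = 0 := by omega
      have hmaj := Γ.exact_maj 0 ht
      have hempty : cblock (2 * n) Γ.s0 Γ.len 0 = ∅ := by
        unfold cblock
        rw [h0]
        simp
      rw [hempty] at hmaj
      simp [cnt] at hmaj
      omega
    have hn : 0 < n := by
      have h1 : blockStart Γ.len 1 ≤ blockStart Γ.len Γ.t := blockStart_mono_s16 _ ht
      rw [Γ.covers] at h1
      have h2 : blockStart Γ.len 1 = Γ.len 0 := by simp [blockStart]
      omega
    have hm : 0 < 2 * n := by omega
    have hcnt : ∀ b : Bool,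
        ∑ i ∈ Finset.range Γ.t, cnt c b (cblock (2 * n) Γ.s0 Γ.len i) = n := by
      intro b
      rw [cnt_sum (2 * n) Γ.s0 Γ.t Γ.len Γ.covers hm c b]
      cases b
      · exact hbal.2
      · exact hbal.1
    have key : ∀ b : Bool,
        (n : ℚ) = k * (((Finset.range Γ.t).filter fun i => Γ.col i = b).card : ℚ) +
          ∑ i ∈ (Finset.range Γ.t).filter (fun i => Γ.col i = !b), (Γ.mino i : ℚ) := by
      intro b
      have h1 := hcnt b
      rw [← Finset.sum_filter_add_sum_filter_not (Finset.range Γ.t)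
        (fun i => Γ.col i = b)] at h1
      have hfn : (Finset.range Γ.t).filter (fun i => ¬ (Γ.col i = b))
          = (Finset.range Γ.t).filter (fun i => Γ.col i = !b) := by
        apply Finset.filter_congr
        intro i _
        cases b <;> cases hb : Γ.col i <;> simp [hb]
      rw [hfn] at h1
      have h2 : ∑ i ∈ (Finset.range Γ.t).filter (fun i => Γ.col i = b),
          cnt c b (cblock (2 * n) Γ.s0 Γ.len i)
          = ((Finset.range Γ.t).filter fun i => Γ.col i = b).card * k := by
        rw [Finset.sum_congr rfl (g := fun _ => k) ?_, Finset.sum_const, smul_eq_mul]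
        intro i hi
        obtain ⟨hit, hib⟩ := Finset.mem_filter.1 hi
        have := Γ.exact_maj i (Finset.mem_range.1 hit)
        rwa [hib] at this
      have h3 : ∑ i ∈ (Finset.range Γ.t).filter (fun i => Γ.col i = !b),
          cnt c b (cblock (2 * n) Γ.s0 Γ.len i)
          = ∑ i ∈ (Finset.range Γ.t).filter (fun i => Γ.col i = !b), Γ.mino i := by
        refine Finset.sum_congr rfl (fun i hi => ?_)
        obtain ⟨hit, hib⟩ := Finset.mem_filter.1 hi
        unfold KConfig.mino
        rw [hib, Bool.not_not]
      rw [h2, h3] at h1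
      have h4 := congrArg (Nat.cast : ℕ → ℚ) h1
      push_cast at h4
      linarith [h4]
    have hbig : (n : ℚ) * Γ.t ≤ ∑ i ∈ Finset.range Γ.t, ∑ j ∈ Finset.range Γ.t,
        (if Γ.col j = Γ.col ((i + Γ.t - j) % Γ.t) then (k : ℚ)
          else max (Γ.mino j : ℚ) (Γ.mino ((i + Γ.t - j) % Γ.t) : ℚ)) := by
      rw [Finset.sum_comm]
      have hre : ∀ j ∈ Finset.range Γ.t,
          ∑ i ∈ Finset.range Γ.t,
            (if Γ.col j = Γ.col ((i + Γ.t - j) % Γ.t) then (k : ℚ)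
              else max (Γ.mino j : ℚ) (Γ.mino ((i + Γ.t - j) % Γ.t) : ℚ))
          = ∑ j' ∈ Finset.range Γ.t,
            (if Γ.col j = Γ.col j' then (k : ℚ)
              else max (Γ.mino j : ℚ) (Γ.mino j' : ℚ)) := by
        intro j hj
        have hjt := Finset.mem_range.1 hj
        refine Finset.sum_bij' (fun a _ => (a + Γ.t - j) % Γ.t)
          (fun b _ => (b + j) % Γ.t) ?_ ?_ ?_ ?_ ?_
        · intro a _; exact Finset.mem_range.2 (Nat.mod_lt _ ht)
        · intro a _; exact Finset.mem_range.2 (Nat.mod_lt _ ht)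
        · intro a ha
          have hat := Finset.mem_range.1 ha
          rw [Nat.mod_add_mod, show a + Γ.t - j + j = a + Γ.t by omega,
            Nat.add_mod_right, Nat.mod_eq_of_lt hat]
        · intro b hb
          have hbt := Finset.mem_range.1 hb
          rw [show (b + j) % Γ.t + Γ.t - j = (b + j) % Γ.t + (Γ.t - j) by omega,
            Nat.mod_add_mod, show b + j + (Γ.t - j) = b + Γ.t by omega,
            Nat.add_mod_right, Nat.mod_eq_of_lt hbt]
        · intro a _; rfl
      rw [Finset.sum_congr rfl hre]
      exact algebra_main Γ.t k n Γ.col Γ.mino key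
    rw [div_le_div_iff₀ (by norm_num) (by exact_mod_cast ht)]
    rw [← Finset.mul_sum]
    linarith [hbig]

end SepMatchPaper
end
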